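/- arXiv:2309.17357 — 3 statements merged into one kernel-verified Lean document; each statement's English description precedes it below -/
import Mathlib

section
/- (Proposition 1.) Fix τ > 0 and an integer K ≥ 1. Let ρ_1 be an absolutely continuous Borel probability measure on Ω with ρ_1(∂Ω) = 0. Suppose that for each 1 ≤ k ≤ K there is a pair (T_k, F_k), with T_k : Ω → Ω Borel measurable and F_k ∈ 𝓕, minimizing (T, F) ↦ 𝓛(F, T_♯ρ_k) + (1/(2τ)) ∫_Ω ‖T(x) − x‖² dρ_k(x) over Borel measurable maps T : Ω → Ω and F ∈ 𝓕, and that each ρ_{k+1} := (T_k)_♯ρ_k is absolutely continuous with ρ_{k+1}(∂Ω) = 0. Then for each 1 ≤ k ≤ K, the measure ρ_{k+1} minimizes ν ↦ Z(ν) + (1/(2τ)) W2²(ν, ρ_k) over Borel probability measures ν on Ω; that is, the sequence (ρ_k) coincides with a minimizing movement scheme for Z starting from ρ_1. -/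
set_option maxHeartbeats 2000000

open MeasureTheory Set Filter Topology ENNReal

section Aux

/-- The CDF of a finite atomless measure on ℝ is continuous. -/
lemma cdf_cont_aux (m : Measure ℝ) [IsFiniteMeasure m] [NullSingletonClass m] :
    Continuous fun t => (m (Iic t)).toReal := by
  have hmono : Monotone fun t => (m (Iic t)).toReal := by
    intro a b hab
    exact ENNReal.toReal_mono (measure_ne_top m _) (measure_mono (Iic_subset_Iic.2 hab))
  rw [continuous_iff_continuousAt]
  intro x
  rw [Metric.continuousAt_iff]
  intro ε hε
  have hR : Tendsto (fun n : ℕ => (m (Iic (x + 1/(n+1)))).toReal) atTop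
      (𝓝 ((m (Iic x)).toReal)) := by
    have h1 : Tendsto (fun n : ℕ => m (Iic (x + 1/(n+1)))) atTop
        (𝓝 (m (⋂ n : ℕ, Iic (x + 1/(n+1))))) := by
      apply tendsto_measure_iInter_atTop (fun n => (measurableSet_Iic).nullMeasurableSet)
      · intro a b hab
        apply Iic_subset_Iic.2
        have : (1:ℝ)/(b+1) ≤ 1/(a+1) := by
          apply one_div_le_one_div_of_le <;> [positivity; exact_mod_cast by omega]
        linarith
      · exact ⟨0, measure_ne_top m _⟩
    have h2 : (⋂ n : ℕ, Iic (x + 1/(n+1))) = Iic x := by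
      ext y; simp only [mem_iInter, mem_Iic]
      constructor
      · intro h
        by_contra hy
        push_neg at hy
        obtain ⟨n, hn⟩ := exists_nat_one_div_lt (show 0 < y - x by linarith)
        have := h n; linarith
      · intro h n; have : (0:ℝ) < 1/(n+1) := by positivity
        linarith
    rw [h2] at h1
    exact (ENNReal.tendsto_toReal (measure_ne_top m _)).comp h1
  have hL : Tendsto (fun n : ℕ => (m (Iic (x - 1/(n+1)))).toReal) atTop
      (𝓝 ((m (Iic x)).toReal)) := by
    have h1 : Tendsto (fun n : ℕ => m (Iic (x - 1/(n+1)))) atTop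
        (𝓝 (m (⋃ n : ℕ, Iic (x - 1/(n+1))))) := by
      apply tendsto_measure_iUnion_atTop
      intro a b hab
      apply Iic_subset_Iic.2
      have : (1:ℝ)/(b+1) ≤ 1/(a+1) := by
        apply one_div_le_one_div_of_le <;> [positivity; exact_mod_cast by omega]
      linarith
    have h2 : (⋃ n : ℕ, Iic (x - 1/(n+1))) = Iio x := by
      ext y; simp only [mem_iUnion, mem_Iic, mem_Iio]
      constructor
      · rintro ⟨n, hn⟩
        have : (0:ℝ) < 1/(n+1) := by positivity
        linarith
      · intro h
        obtain ⟨n, hn⟩ := exists_nat_one_div_lt (show 0 < x - y by linarith)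
        exact ⟨n, by linarith⟩
    rw [h2] at h1
    have h3 : m (Iio x) = m (Iic x) := by
      rw [← Iio_union_right]
      refine le_antisymm (measure_mono subset_union_left) ?_
      calc m (Iio x ∪ {x}) ≤ m (Iio x) + m {x} := measure_union_le _ _
      _ = m (Iio x) := by rw [measure_singleton, add_zero]
    rw [h3] at h1
    exact (ENNReal.tendsto_toReal (measure_ne_top m _)).comp h1
  have hεR := (hR.eventually (eventually_lt_nhds
    (show (m (Iic x)).toReal < (m (Iic x)).toReal + ε by linarith))).exists
  have hεL := (hL.eventually (eventually_gt_nhds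
    (show (m (Iic x)).toReal - ε < (m (Iic x)).toReal by linarith))).exists
  obtain ⟨n1, hn1⟩ := hεR
  obtain ⟨n2, hn2⟩ := hεL
  refine ⟨min (1/(n1+1)) (1/(n2+1)), by positivity, fun {y} hy => ?_⟩
  rw [Real.dist_eq] at hy ⊢
  rw [abs_sub_lt_iff] at hy ⊢
  have hy1 : y < x + 1/(n1+1) := by
    have := lt_of_lt_of_le hy.1 (min_le_left _ _); linarith
  have hy2 : x - 1/(n2+1) < y := by
    have := lt_of_lt_of_le hy.2 (min_le_right _ _); linarith
  constructor
  · have := hmono hy1.le; linarith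
  · have := hmono hy2.le; linarith

/-- Sierpiński: an atomless finite measure on ℝ attains every value up to its total mass. -/
lemma exists_set_measure_eq_aux (m : Measure ℝ) [IsFiniteMeasure m] [NullSingletonClass m]
    {r : ℝ≥0∞} (hr : r ≤ m univ) : ∃ A : Set ℝ, MeasurableSet A ∧ m A = r := by
  have hrt : r ≠ ⊤ := (lt_of_le_of_lt hr (measure_lt_top m univ)).ne
  rcases eq_or_lt_of_le hr with heq | hlt
  · exact ⟨univ, MeasurableSet.univ, heq.symm⟩
  set φ := fun t => (m (Iic t)).toReal with hφ
  set R := r.toReal with hR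
  have hRlt : R < (m univ).toReal := by
    exact ENNReal.toReal_lt_toReal hrt (measure_ne_top m univ) |>.mpr hlt
  rcases le_or_gt R 0 with hR0 | hR0
  · have : r = 0 := by
      have := ENNReal.toReal_nonneg (a := r)
      have : R = 0 := le_antisymm hR0 this
      exact (ENNReal.toReal_eq_zero_iff r).mp this |>.resolve_right hrt
    exact ⟨∅, MeasurableSet.empty, by simp [this]⟩
  have htop : Tendsto (fun n : ℕ => m (Iic (-(n:ℝ)))) atTop
      (𝓝 (m (⋂ n : ℕ, Iic (-(n:ℝ))))) := by
    apply tendsto_measure_iInter_atTop (fun n => measurableSet_Iic.nullMeasurableSet)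
    · intro a b hab
      exact Iic_subset_Iic.2 (by exact_mod_cast neg_le_neg (by exact_mod_cast hab))
    · exact ⟨0, measure_ne_top m _⟩
  have hIempty : (⋂ n : ℕ, Iic (-(n:ℝ))) = ∅ := by
    ext y; simp only [mem_iInter, mem_Iic, mem_empty_iff_false, iff_false, not_forall]
    obtain ⟨n, hn⟩ := exists_nat_gt (-y)
    exact ⟨n, by push_neg; linarith⟩
  rw [hIempty, measure_empty] at htop
  have htopR : Tendsto (fun n : ℕ => φ (-(n:ℝ))) atTop (𝓝 0) := by
    have := (ENNReal.tendsto_toReal (by simp)).comp htop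
    simpa [hφ, Function.comp_def] using this
  obtain ⟨n0, hn0⟩ := (htopR.eventually (eventually_lt_nhds hR0)).exists
  have hbot : Tendsto (fun n : ℕ => m (Iic (n:ℝ))) atTop (𝓝 (m (⋃ n : ℕ, Iic (n:ℝ)))) := by
    apply tendsto_measure_iUnion_atTop
    intro a b hab
    exact Iic_subset_Iic.2 (by exact_mod_cast hab)
  have hUuniv : (⋃ n : ℕ, Iic (n:ℝ)) = univ := by
    ext y; simp only [mem_iUnion, mem_Iic, mem_univ, iff_true]
    obtain ⟨n, hn⟩ := exists_nat_gt y
    exact ⟨n, hn.le⟩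
  rw [hUuniv] at hbot
  have hbotR : Tendsto (fun n : ℕ => φ (n:ℝ)) atTop (𝓝 ((m univ).toReal)) :=
    (ENNReal.tendsto_toReal (measure_ne_top m _)).comp hbot
  obtain ⟨n1, hn1⟩ := (hbotR.eventually (eventually_gt_nhds hRlt)).exists
  have hab : (-(n0:ℝ)) ≤ (n1:ℝ) := by
    have h0 : (0:ℝ) ≤ n0 := Nat.cast_nonneg n0
    have h1 : (0:ℝ) ≤ n1 := Nat.cast_nonneg n1
    linarith
  have hIVT := intermediate_value_Icc hab
    ((cdf_cont_aux m).continuousOn (s := Icc (-(n0:ℝ)) (n1:ℝ)))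
  have hRmem : R ∈ Icc (φ (-(n0:ℝ))) (φ (n1:ℝ)) := ⟨hn0.le, hn1.le⟩
  obtain ⟨t, _, ht⟩ := hIVT hRmem
  refine ⟨Iic t, measurableSet_Iic, ?_⟩
  have : (m (Iic t)).toReal = r.toReal := ht
  exact (ENNReal.toReal_eq_toReal_iff' (measure_ne_top m _) hrt).mp this

lemma exists_subset_meas_aux {α : Type*} [MeasurableSpace α] (μ : Measure α) [IsFiniteMeasure μ]
    {f : α → ℝ} (hf : Measurable f) (hatom : ∀ t, μ (f ⁻¹' {t}) = 0)
    {s : Set α} (hs : MeasurableSet s) {r : ℝ≥0∞} (hr : r ≤ μ s) :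
    ∃ t, t ⊆ s ∧ MeasurableSet t ∧ μ t = r := by
  set m := (μ.restrict s).map f with hm
  have hmuniv : m univ = μ s := by
    rw [hm, Measure.map_apply hf MeasurableSet.univ, preimage_univ, Measure.restrict_apply_univ]
  haveI : IsFiniteMeasure m := ⟨by rw [hmuniv]; exact measure_lt_top μ s⟩
  haveI : NullSingletonClass m := by
    constructor
    intro t
    rw [hm, Measure.map_apply hf (measurableSet_singleton t),
      Measure.restrict_apply (hf (measurableSet_singleton t))]
    exact measure_mono_null inter_subset_left (hatom t)
  obtain ⟨A, hA, hAr⟩ := exists_set_measure_eq_aux m (r := r) (by rw [hmuniv]; exact hr)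
  refine ⟨s ∩ f ⁻¹' A, inter_subset_left, hs.inter (hf hA), ?_⟩
  rw [← hAr, hm, Measure.map_apply hf hA, Measure.restrict_apply (hf hA)]
  rw [inter_comm]

/-- Split a measurable set into finitely many measurable pieces of prescribed measures. -/
lemma split_meas_aux {α : Type*} [MeasurableSpace α] (μ : Measure α) [IsFiniteMeasure μ]
    {f : α → ℝ} (hf : Measurable f) (hatom : ∀ t, μ (f ⁻¹' {t}) = 0) :
    ∀ (n : ℕ) (s : Set α), MeasurableSet s → ∀ (v : Fin n → ℝ≥0∞), (∑ i, v i) = μ s →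
    ∃ E : Fin n → Set α, (∀ i, MeasurableSet (E i)) ∧ (∀ i, E i ⊆ s) ∧
      Pairwise (Function.onFun Disjoint E) ∧ (∀ i, μ (E i) = v i) := by
  intro n
  induction n with
  | zero =>
      intro s hs v hv
      exact ⟨fun i => i.elim0, fun i => i.elim0, fun i => i.elim0, fun i => i.elim0,
        fun i => i.elim0⟩
  | succ n ih =>
      intro s hs v hv
      have h0 : v 0 ≤ μ s := by
        rw [← hv, Fin.sum_univ_succ]
        exact le_add_right le_rfl
      obtain ⟨t, hts, htm, htr⟩ := exists_subset_meas_aux μ hf hatom hs h0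
      have hs' : MeasurableSet (s \ t) := hs.diff htm
      have hv' : (∑ i : Fin n, v i.succ) = μ (s \ t) := by
        rw [MeasureTheory.measure_diff hts htm.nullMeasurableSet (measure_ne_top μ t), htr, ← hv,
          Fin.sum_univ_succ, ENNReal.add_sub_cancel_left (htr ▸ measure_ne_top μ t)]
      obtain ⟨E', hE'm, hE's, hE'd, hE'v⟩ := ih (s \ t) hs' (fun i => v i.succ) hv'
      refine ⟨Fin.cases t E', ?_, ?_, ?_, ?_⟩
      · intro i; induction i using Fin.cases with
        | zero => exact htm
        | succ j => exact hE'm j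
      · intro i; induction i using Fin.cases with
        | zero => exact hts
        | succ j => exact (hE's j).trans diff_subset
      · intro i j hij
        induction i using Fin.cases with
        | zero =>
            induction j using Fin.cases with
            | zero => exact absurd rfl hij
            | succ j' =>
                simp only [Function.onFun, Fin.cases_zero, Fin.cases_succ]
                exact (disjoint_sdiff_self_right).mono_right (hE's j')
        | succ i' =>
            induction j using Fin.cases with
            | zero =>
                simp only [Function.onFun, Fin.cases_zero, Fin.cases_succ]
                exact (disjoint_sdiff_self_left).mono_left (hE's i')
            | succ j' =>
                simp only [Function.onFun, Fin.cases_succ]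
                exact hE'd (fun h => hij (congrArg Fin.succ h))
      · intro i; induction i using Fin.cases with
        | zero => simpa using htr
        | succ j => simpa using hE'v j

/-- A compact metric space admits a finite measurable partition into pieces of small diameter. -/
lemma fine_partition_aux {X : Type*} [MetricSpace X] [CompactSpace X] [MeasurableSpace X]
    [OpensMeasurableSpace X] {δ : ℝ} (hδ : 0 < δ) :
    ∃ (n : ℕ) (x : Fin n → X) (C : Fin n → Set X),
      (∀ i, MeasurableSet (C i)) ∧ Pairwise (Function.onFun Disjoint C) ∧
      (⋃ i, C i) = univ ∧ (∀ i, ∀ y ∈ C i, dist y (x i) < δ) := by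
  obtain ⟨t, ht⟩ := (isCompact_univ (X := X)).elim_finite_subcover
    (fun y : X => Metric.ball y δ) (fun y => Metric.isOpen_ball)
    (fun y _ => mem_iUnion.2 ⟨y, Metric.mem_ball_self hδ⟩)
  set n := t.card with hn
  set x : Fin n → X := fun i => (t.equivFin.symm i).1 with hx
  have hcov : ∀ y : X, ∃ i : Fin n, dist y (x i) < δ := by
    intro y
    have := ht (mem_univ y)
    simp only [mem_iUnion] at this
    obtain ⟨z, hz, hyz⟩ := this
    exact ⟨t.equivFin ⟨z, hz⟩, by simpa [hx] using hyz⟩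
  refine ⟨n, x, fun i => Metric.ball (x i) δ \ ⋃ (l : Fin n) (_ : l < i), Metric.ball (x l) δ,
    ?_, ?_, ?_, ?_⟩
  · intro i
    exact (Metric.isOpen_ball.measurableSet).diff
      (MeasurableSet.iUnion fun l => MeasurableSet.iUnion fun _ => Metric.isOpen_ball.measurableSet)
  · intro i j hij
    rcases lt_or_gt_of_ne hij with h | h
    · rw [Function.onFun, Set.disjoint_left]
      rintro a ⟨hai, -⟩ ⟨-, haj⟩
      exact haj (mem_iUnion.2 ⟨i, mem_iUnion.2 ⟨h, hai⟩⟩)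
    · rw [Function.onFun, Set.disjoint_left]
      rintro a ⟨-, hai⟩ ⟨haj, -⟩
      exact hai (mem_iUnion.2 ⟨j, mem_iUnion.2 ⟨h, haj⟩⟩)
  · apply eq_univ_of_forall
    intro y
    have hex : ∃ l : ℕ, ∃ h : l < n, y ∈ Metric.ball (x ⟨l, h⟩) δ := by
      obtain ⟨i, hi⟩ := hcov y
      exact ⟨i.1, i.2, by simpa using hi⟩
    classical
    obtain ⟨h0, hball⟩ := Nat.find_spec hex
    refine mem_iUnion.2 ⟨⟨Nat.find hex, h0⟩, hball, ?_⟩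
    intro hmem
    rw [mem_iUnion] at hmem
    obtain ⟨l, hmem⟩ := hmem
    rw [mem_iUnion] at hmem
    obtain ⟨hl, hball'⟩ := hmem
    exact Nat.find_min hex (by exact_mod_cast hl) ⟨l.2, by simpa using hball'⟩
  · intro i y hy
    simpa [Metric.mem_ball] using hy.1

lemma slice_null_aux {d : ℕ} (hd : 1 ≤ d) {Ω : Set (EuclideanSpace ℝ (Fin d))}
    (μ : Measure Ω) (hac : μ.map (Subtype.val : Ω → EuclideanSpace ℝ (Fin d)) ≪ volume)
    (t : ℝ) :
    μ ((fun y : Ω => (y : EuclideanSpace ℝ (Fin d)) ⟨0, hd⟩) ⁻¹' {t}) = 0 := by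
  set i0 : Fin d := ⟨0, hd⟩
  set H : Set (EuclideanSpace ℝ (Fin d)) := {z | z i0 = t} with hH
  have hHmeas : MeasurableSet H := by
    have : H = (EuclideanSpace.proj (𝕜 := ℝ) i0) ⁻¹' {t} := by
      ext z; simp [hH, PiLp.proj_apply]
    rw [this]
    exact (EuclideanSpace.proj (𝕜 := ℝ) i0).continuous.measurable (measurableSet_singleton t)
  have hHvol : volume H = 0 := by
    set K := LinearMap.ker ((EuclideanSpace.proj (𝕜 := ℝ) i0) :
      EuclideanSpace ℝ (Fin d) →ₗ[ℝ] ℝ) with hK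
    have hKne : K ≠ ⊤ := by
      intro h
      have : EuclideanSpace.single i0 (1:ℝ) ∈ K := h ▸ Submodule.mem_top
      rw [hK, LinearMap.mem_ker] at this
      simp [PiLp.proj_apply, EuclideanSpace.single_apply] at this
    have hKset : (K : Set (EuclideanSpace ℝ (Fin d))) = {z | z i0 = 0} := by
      ext z
      simp [hK, LinearMap.mem_ker, PiLp.proj_apply]
    have hK0 : volume ({z : EuclideanSpace ℝ (Fin d) | z i0 = 0}) = 0 := by
      rw [← hKset]
      exact Measure.addHaar_submodule volume K hKne
    have htrans : H = (fun z : EuclideanSpace ℝ (Fin d) =>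
        z + (-t) • EuclideanSpace.single i0 (1:ℝ)) ⁻¹' {z | z i0 = 0} := by
      ext z
      simp only [mem_preimage, mem_setOf_eq, hH]
      have : (z + (-t) • EuclideanSpace.single i0 (1:ℝ)) i0 = z i0 - t := by
        simp [EuclideanSpace.single_apply]
        ring
      rw [this]
      constructor <;> intro h <;> linarith
    rw [htrans, measure_preimage_add_right]
    exact hK0
  have hpre : (fun y : Ω => (y : EuclideanSpace ℝ (Fin d)) i0) ⁻¹' {t}
      = (Subtype.val : Ω → EuclideanSpace ℝ (Fin d)) ⁻¹' H := by
    ext y; simp [hH]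
  rw [hpre, ← Measure.map_apply measurable_subtype_coe hHmeas]
  exact hac hHvol

end Aux


/-- Squared Wasserstein distance between Borel probability measures on a subset `Ω` of
Euclidean space: the infimum of the quadratic transport cost over all couplings. -/
noncomputable def W2sq {d : ℕ} {Ω : Set (EuclideanSpace ℝ (Fin d))}
    (α β : Measure Ω) : ℝ :=
  sInf { c : ℝ | ∃ γ : Measure (Ω × Ω), IsProbabilityMeasure γ ∧
    γ.map Prod.fst = α ∧ γ.map Prod.snd = β ∧
    c = ∫ p, ‖(p.1 : EuclideanSpace ℝ (Fin d)) - (p.2 : EuclideanSpace ℝ (Fin d))‖ ^ 2 ∂γ }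

/-- The quadratic transport cost of a map `T : Ω → Ω` with respect to `μ`. -/
noncomputable def transportCost {d : ℕ} {Ω : Set (EuclideanSpace ℝ (Fin d))}
    (T : Ω → Ω) (μ : Measure Ω) : ℝ :=
  ∫ x, ‖(T x : EuclideanSpace ℝ (Fin d)) - (x : EuclideanSpace ℝ (Fin d))‖ ^ 2 ∂μ

/-- Proposition 1: the measures produced by the transport-regularized module-wise problems
coincide with a minimizing movement scheme for `Z ν = ⨅ F, ∫ L F x ∂ν`. -/
theorem stmt3 {d : ℕ} (hd : 1 ≤ d) (Ω : Set (EuclideanSpace ℝ (Fin d)))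
    (hconv : Convex ℝ Ω) (hcomp : IsCompact Ω)
    (hfront : volume (frontier Ω) = 0)
    (𝓕 : Type*) [MetricSpace 𝓕] [CompactSpace 𝓕] [Nonempty 𝓕]
    (L : 𝓕 → Ω → ℝ) (hLcont : Continuous fun p : 𝓕 × Ω => L p.1 p.2)
    (hLnonneg : ∀ F x, 0 ≤ L F x)
    (τ : ℝ) (hτ : 0 < τ) (K : ℕ) (hK : 1 ≤ K)
    (ρ : ℕ → Measure Ω) (T : ℕ → Ω → Ω) (F : ℕ → 𝓕)
    (hprob : ∀ k, 1 ≤ k → k ≤ K + 1 → IsProbabilityMeasure (ρ k))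
    (hac : ∀ k, 1 ≤ k → k ≤ K + 1 →
      (ρ k).map (Subtype.val : Ω → EuclideanSpace ℝ (Fin d)) ≪ volume)
    (hρfront : ∀ k, 1 ≤ k → k ≤ K + 1 →
      (ρ k).map (Subtype.val : Ω → EuclideanSpace ℝ (Fin d)) (frontier Ω) = 0)
    (hTmeas : ∀ k, 1 ≤ k → k ≤ K → Measurable (T k))
    (hmin : ∀ k, 1 ≤ k → k ≤ K → ∀ T' : Ω → Ω, Measurable T' → ∀ F' : 𝓕,
      (∫ x, L (F k) x ∂((ρ k).map (T k))) + (1 / (2 * τ)) * transportCost (T k) (ρ k)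
        ≤ (∫ x, L F' x ∂((ρ k).map T')) + (1 / (2 * τ)) * transportCost T' (ρ k))
    (hstep : ∀ k, 1 ≤ k → k ≤ K → ρ (k + 1) = (ρ k).map (T k)) :
    ∀ k, 1 ≤ k → k ≤ K → ∀ ν : Measure Ω, IsProbabilityMeasure ν →
      (⨅ F' : 𝓕, ∫ x, L F' x ∂(ρ (k + 1))) + (1 / (2 * τ)) * W2sq (ρ (k + 1)) (ρ k)
        ≤ (⨅ F' : 𝓕, ∫ x, L F' x ∂ν) + (1 / (2 * τ)) * W2sq ν (ρ k) := by
  intro k hk1 hkK ν hν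
  haveI hPk : IsProbabilityMeasure (ρ k) := hprob k hk1 (by omega)
  haveI hPk1 : IsProbabilityMeasure (ρ (k+1)) := hprob (k+1) (by omega) (by omega)
  haveI : CompactSpace Ω := isCompact_iff_compactSpace.mp hcomp
  -- Ω is nonempty
  rcases isEmpty_or_nonempty Ω with hemp | hne
  · exfalso
    have h1 : ν univ = 1 := measure_univ
    rw [Set.univ_eq_empty_iff.mpr hemp] at h1
    simp at h1
  set c : ℝ := 1 / (2 * τ) with hcdef
  have hcpos : 0 < c := by positivity
  -- bound on distances in Ω
  obtain ⟨D0, hD0⟩ := Metric.isBounded_iff.mp (isCompact_univ (X := Ω)).isBounded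
  set D : ℝ := max D0 0 with hDdef
  have hD : ∀ y z : Ω, dist y z ≤ D := fun y z =>
    le_trans (hD0 (mem_univ y) (mem_univ z)) (le_max_left _ _)
  have hDpos : 0 ≤ D := le_max_right _ _
  -- bound on L
  obtain ⟨M, hM⟩ := (isCompact_univ (X := 𝓕 × Ω)).exists_bound_of_continuousOn
    hLcont.continuousOn
  -- continuity of L in the second variable
  have hLFc : ∀ G : 𝓕, Continuous fun a : Ω => L G a := fun G =>
    hLcont.comp (continuous_const.prodMk continuous_id)
  -- bounded-below facts
  have hZbdd : ∀ μ : Measure Ω, BddBelow (Set.range fun F' : 𝓕 => ∫ x, L F' x ∂μ) := by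
    intro μ
    refine ⟨0, ?_⟩
    rintro r ⟨F', rfl⟩
    exact integral_nonneg fun y => hLnonneg F' y
  -- the coupling cost integrand
  set costf : Ω × Ω → ℝ := fun q =>
    ‖(q.1 : EuclideanSpace ℝ (Fin d)) - (q.2 : EuclideanSpace ℝ (Fin d))‖ ^ 2 with hcostf
  have hcost_cont : Continuous costf := by
    apply Continuous.pow
    exact ((continuous_subtype_val.comp continuous_fst).sub
      (continuous_subtype_val.comp continuous_snd)).norm
  have hcost_eq_dist : ∀ q : Ω × Ω, costf q = dist q.1 q.2 ^ 2 := by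
    intro q
    rw [hcostf, Subtype.dist_eq, dist_eq_norm]
  have hcost_bdd : ∀ q : Ω × Ω, ‖costf q‖ ≤ D ^ 2 := by
    intro q
    rw [hcost_eq_dist, Real.norm_eq_abs, abs_of_nonneg (by positivity)]
    exact pow_le_pow_left₀ dist_nonneg (hD _ _) 2
  have hcost_nonneg : ∀ q : Ω × Ω, 0 ≤ costf q := fun q => by
    rw [hcost_eq_dist]; positivity
  -- 1. Upper bound for the left side via the pair (T k, F k)
  have hW2le : W2sq (ρ (k+1)) (ρ k) ≤ transportCost (T k) (ρ k) := by
    have hpair : Measurable fun y : Ω => (T k y, y) :=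
      (hTmeas k hk1 hkK).prodMk measurable_id
    apply csInf_le
    · refine ⟨0, ?_⟩
      rintro r ⟨γ, hγP, h1, h2, rfl⟩
      exact integral_nonneg fun q => hcost_nonneg q
    · refine ⟨(ρ k).map (fun y => (T k y, y)), Measure.isProbabilityMeasure_map hpair.aemeasurable,
        ?_, ?_, ?_⟩
      · rw [Measure.map_map measurable_fst hpair, hstep k hk1 hkK]
        rfl
      · rw [Measure.map_map measurable_snd hpair]
        exact Measure.map_id
      · rw [integral_map hpair.aemeasurable
          (hcost_cont.stronglyMeasurable.aestronglyMeasurable)]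
        rfl
  have hZ1le : (⨅ F' : 𝓕, ∫ x, L F' x ∂(ρ (k+1))) ≤ ∫ x, L (F k) x ∂(ρ (k+1)) :=
    ciInf_le (hZbdd _) (F k)
  -- the key epsilon-approximation step
  have key : ∀ ε : ℝ, 0 < ε →
      (⨅ F' : 𝓕, ∫ x, L F' x ∂(ρ (k + 1))) + c * W2sq (ρ (k + 1)) (ρ k)
        ≤ (⨅ F' : 𝓕, ∫ x, L F' x ∂ν) + c * W2sq ν (ρ k) + (3 + c) * ε := by
    intro ε hε
    -- choose a near-optimal F'
    obtain ⟨F', hF'⟩ := exists_lt_of_ciInf_lt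
      (lt_add_of_pos_right (⨅ F' : 𝓕, ∫ x, L F' x ∂ν) hε)
    -- choose a near-optimal coupling γ
    have hSne : Set.Nonempty { r : ℝ | ∃ γ : Measure (Ω × Ω), IsProbabilityMeasure γ ∧
        γ.map Prod.fst = ν ∧ γ.map Prod.snd = ρ k ∧ r = ∫ q, costf q ∂γ } := by
      refine ⟨∫ q, costf q ∂(ν.prod (ρ k)), ν.prod (ρ k), inferInstance, ?_, ?_, rfl⟩
      · rw [Measure.map_fst_prod]; simp
      · rw [Measure.map_snd_prod]; simp
    obtain ⟨r, hrS, hrlt⟩ := Real.lt_sInf_add_pos hSne hε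
    have hWrfl : W2sq ν (ρ k) = sInf { r : ℝ | ∃ γ : Measure (Ω × Ω), IsProbabilityMeasure γ ∧
        γ.map Prod.fst = ν ∧ γ.map Prod.snd = ρ k ∧ r = ∫ q, costf q ∂γ } := rfl
    rw [← hWrfl] at hrlt
    obtain ⟨γ, hγP, hγ1, hγ2, rfl⟩ := hrS
    -- uniform continuity of L
    obtain ⟨δ1, hδ1pos, hLδ⟩ := Metric.uniformContinuous_iff.mp
      (CompactSpace.uniformContinuous_of_continuous hLcont) ε hε
    have hLpt : ∀ (G : 𝓕) (a b : Ω), dist a b < δ1 → |L G a - L G b| < ε := by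
      intro G a b h
      have h2 : dist ((G, a) : 𝓕 × Ω) (G, b) < δ1 := by
        rw [Prod.dist_eq, dist_self, max_eq_right dist_nonneg]
        exact h
      have h3 := hLδ h2
      rwa [Real.dist_eq] at h3
    -- choice of δ
    set δ : ℝ := min δ1 (min 1 (ε / (c * (6*D + 9) + 1))) with hδdef
    have hδpos : 0 < δ := lt_min hδ1pos (lt_min one_pos (by positivity))
    have hδδ1 : δ ≤ δ1 := min_le_left _ _
    have hδ1' : δ ≤ 1 := le_trans (min_le_right _ _) (min_le_left _ _)
    have hδε : c * (δ * (6*D + 9)) ≤ ε := by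
      have h1 : δ ≤ ε / (c * (6*D + 9) + 1) := le_trans (min_le_right _ _) (min_le_right _ _)
      have h2 : (0:ℝ) < c * (6*D+9) + 1 := by positivity
      rw [le_div_iff₀ h2] at h1
      nlinarith [hδpos.le]
    -- partition of Ω
    obtain ⟨n, x, C, hCmeas, hCdisj, hCuniv, hCdist⟩ := fine_partition_aux (X := Ω) hδpos
    have hCm2 : ∀ p : Fin n × Fin n, MeasurableSet (C p.1 ×ˢ C p.2) := fun p =>
      (hCmeas p.1).prod (hCmeas p.2)
    have hCd2 : Pairwise (Function.onFun Disjoint fun p : Fin n × Fin n => C p.1 ×ˢ C p.2) := by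
      intro p q hpq
      rw [Function.onFun, Set.disjoint_left]
      rintro ⟨a, b⟩ ⟨ha, hb⟩ ⟨ha', hb'⟩
      by_cases h1 : p.1 = q.1
      · have h2 : p.2 ≠ q.2 := fun h2 => hpq (Prod.ext h1 h2)
        exact Set.disjoint_left.mp (hCdisj h2) hb hb'
      · exact Set.disjoint_left.mp (hCdisj h1) ha ha'
    have hCu2 : (⋃ p : Fin n × Fin n, C p.1 ×ˢ C p.2) = univ := by
      apply eq_univ_of_forall
      rintro ⟨a, b⟩
      obtain ⟨i, hi⟩ := mem_iUnion.mp (show a ∈ ⋃ i, C i by rw [hCuniv]; trivial)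
      obtain ⟨j, hj⟩ := mem_iUnion.mp (show b ∈ ⋃ i, C i by rw [hCuniv]; trivial)
      exact mem_iUnion.2 ⟨(i, j), ⟨hi, hj⟩⟩
    -- cell masses from the coupling
    set m : Fin n × Fin n → ℝ≥0∞ := fun p => γ (C p.1 ×ˢ C p.2) with hmdef
    have hmne : ∀ p, m p ≠ ⊤ := fun p => measure_ne_top γ _
    have hrow : ∀ i, (∑ j, m (i, j)) = ν (C i) := by
      intro i
      rw [← hγ1, Measure.map_apply measurable_fst (hCmeas i)]
      have hpre : Prod.fst ⁻¹' C i = ⋃ j, C i ×ˢ C j := by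
        ext ⟨a, b⟩
        simp only [mem_preimage, mem_iUnion, mem_prod]
        constructor
        · intro h
          obtain ⟨j, hj⟩ := mem_iUnion.mp (show b ∈ ⋃ jj, C jj by rw [hCuniv]; trivial)
          exact ⟨j, h, hj⟩
        · rintro ⟨j, h, -⟩; exact h
      rw [hpre, measure_iUnion ?_ (fun j => hCm2 (i, j)), tsum_fintype]
      intro j j' hjj'
      rw [Function.onFun, Set.disjoint_left]
      rintro ⟨a, b⟩ ⟨-, hb⟩ ⟨-, hb'⟩
      exact Set.disjoint_left.mp (hCdisj hjj') hb hb'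
    have hcol : ∀ j, (∑ i, m (i, j)) = ρ k (C j) := by
      intro j
      rw [← hγ2, Measure.map_apply measurable_snd (hCmeas j)]
      have hpre : Prod.snd ⁻¹' C j = ⋃ i, C i ×ˢ C j := by
        ext ⟨a, b⟩
        simp only [mem_preimage, mem_iUnion, mem_prod]
        constructor
        · intro h
          obtain ⟨i, hi⟩ := mem_iUnion.mp (show a ∈ ⋃ ii, C ii by rw [hCuniv]; trivial)
          exact ⟨i, hi, h⟩
        · rintro ⟨i, -, h⟩; exact h
      rw [hpre, measure_iUnion ?_ (fun i => hCm2 (i, j)), tsum_fintype]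
      intro i i' hii'
      rw [Function.onFun, Set.disjoint_left]
      rintro ⟨a, b⟩ ⟨ha, -⟩ ⟨ha', -⟩
      exact Set.disjoint_left.mp (hCdisj hii') ha ha'
    -- split each cell of the partition according to the coupling masses
    have hfmeas : Measurable fun y : Ω => (y : EuclideanSpace ℝ (Fin d)) ⟨0, hd⟩ :=
      ((EuclideanSpace.proj (𝕜 := ℝ) (⟨0, hd⟩ : Fin d)).continuous.comp
        continuous_subtype_val).measurable
    have hatom := slice_null_aux hd (ρ k) (hac k hk1 (by omega))
    have hsplit : ∀ j : Fin n, ∃ E : Fin n → Set Ω, (∀ i, MeasurableSet (E i)) ∧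
        (∀ i, E i ⊆ C j) ∧ Pairwise (Function.onFun Disjoint E) ∧
        (∀ i, ρ k (E i) = m (i, j)) :=
      fun j => split_meas_aux (ρ k) hfmeas hatom n (C j) (hCmeas j) (fun i => m (i, j)) (hcol j)
    choose E hEmeas hEsub hEdisj hEval using hsplit
    obtain ⟨y0⟩ := hne
    obtain ⟨i₀, hi₀⟩ := mem_iUnion.mp (show y0 ∈ ⋃ i, C i by rw [hCuniv]; trivial)
    set R : Fin n → Set Ω := fun j => C j \ ⋃ i, E j i with hRdef
    have hRmeas : ∀ j, MeasurableSet (R j) := fun j =>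
      (hCmeas j).diff (MeasurableSet.iUnion (hEmeas j))
    have hRsub : ∀ j, R j ⊆ C j := fun j => diff_subset
    have hRnull : ∀ j, ρ k (R j) = 0 := by
      intro j
      have hU : ρ k (⋃ i, E j i) = ρ k (C j) := by
        rw [measure_iUnion (hEdisj j) (hEmeas j), tsum_fintype,
          Finset.sum_congr rfl (fun i _ => hEval j i)]
        exact hcol j
      rw [hRdef]
      dsimp only
      rw [MeasureTheory.measure_diff (iUnion_subset (hEsub j))
        (MeasurableSet.iUnion (hEmeas j)).nullMeasurableSet (measure_ne_top _ _), hU, tsub_self]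
    have hmeasUnionNull : ∀ (A N : Set Ω), ρ k N = 0 → ρ k (A ∪ N) = ρ k A := by
      intro A N hN
      refine le_antisymm ?_ (measure_mono subset_union_left)
      calc ρ k (A ∪ N) ≤ ρ k A + ρ k N := measure_union_le _ _
        _ = ρ k A := by rw [hN, add_zero]
    classical
    set E' : Fin n × Fin n → Set Ω :=
      fun p => if p.1 = i₀ then E p.2 p.1 ∪ R p.2 else E p.2 p.1 with hE'def
    have hE'meas : ∀ p, MeasurableSet (E' p) := by
      intro p; rw [hE'def]; dsimp only
      split
      · exact (hEmeas p.2 p.1).union (hRmeas p.2)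
      · exact hEmeas p.2 p.1
    have hE'sub : ∀ p, E' p ⊆ C p.2 := by
      intro p; rw [hE'def]; dsimp only
      split
      · exact union_subset (hEsub p.2 p.1) (hRsub p.2)
      · exact hEsub p.2 p.1
    have hEsubE' : ∀ p : Fin n × Fin n, E p.2 p.1 ⊆ E' p := by
      intro p; rw [hE'def]; dsimp only
      split
      · exact subset_union_left
      · exact subset_rfl
    have hE'val : ∀ p, ρ k (E' p) = m p := by
      intro p; rw [hE'def]; dsimp only
      split
      · rw [hmeasUnionNull _ _ (hRnull p.2)]; exact hEval p.2 p.1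
      · exact hEval p.2 p.1
    have hE'disj : Pairwise (Function.onFun Disjoint E') := by
      intro p q hpq
      by_cases h2 : p.2 = q.2
      · have h1 : p.1 ≠ q.1 := fun h1 => hpq (Prod.ext h1 h2)
        have hRE : ∀ i, Disjoint (R p.2) (E p.2 i) := fun i =>
          (disjoint_sdiff_self_left).mono_right (subset_iUnion (E p.2) i)
        rw [Function.onFun, hE'def]
        dsimp only
        rcases eq_or_ne p.1 i₀ with hp | hp <;> rcases eq_or_ne q.1 i₀ with hq | hq
        · exact absurd (hp.trans hq.symm) h1
        · rw [if_pos hp, if_neg hq, ← h2]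
          exact disjoint_union_left.mpr ⟨hEdisj p.2 h1, hRE q.1⟩
        · rw [if_neg hp, if_pos hq, ← h2]
          exact disjoint_union_right.mpr ⟨hEdisj p.2 h1, (hRE p.1).symm⟩
        · rw [if_neg hp, if_neg hq, ← h2]
          exact hEdisj p.2 h1
      · exact Disjoint.mono (hE'sub p) (hE'sub q) (hCdisj h2)
    have hE'univ : (⋃ p, E' p) = univ := by
      apply eq_univ_of_forall
      intro y
      obtain ⟨j, hj⟩ := mem_iUnion.mp (show y ∈ ⋃ i, C i by rw [hCuniv]; trivial)
      by_cases hy : y ∈ ⋃ i, E j i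
      · obtain ⟨i, hi⟩ := mem_iUnion.mp hy
        exact mem_iUnion.2 ⟨(i, j), hEsubE' (i, j) hi⟩
      · refine mem_iUnion.2 ⟨(i₀, j), ?_⟩
        rw [hE'def]
        dsimp only
        rw [if_pos rfl]
        exact Or.inr ⟨hj, hy⟩
    have hcovE : ∀ y : Ω, ∃ p, y ∈ E' p := fun y =>
      mem_iUnion.mp (by rw [hE'univ]; trivial)
    set T' : Ω → Ω := fun y => x (Classical.choose (hcovE y)).1 with hT'def
    have hT'mem : ∀ p, ∀ y ∈ E' p, T' y = x p.1 := by
      intro p y hy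
      have hq := Classical.choose_spec (hcovE y)
      by_cases h : Classical.choose (hcovE y) = p
      · rw [hT'def]; dsimp only; rw [h]
      · exact absurd hy (Set.disjoint_left.mp (hE'disj h) hq)
    have hT'meas : Measurable T' := by
      intro s hs
      have hpre : T' ⁻¹' s = ⋃ p, ⋃ (_ : x p.1 ∈ s), E' p := by
        ext y
        simp only [mem_preimage, mem_iUnion]
        constructor
        · intro h
          exact ⟨Classical.choose (hcovE y), h, Classical.choose_spec (hcovE y)⟩
        · rintro ⟨p, hps, hyp⟩
          have := hT'mem p y hyp
          rw [hT'def] at this ⊢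
          dsimp only at this ⊢
          rw [this]
          exact hps
      rw [hpre]
      exact MeasurableSet.iUnion fun p => MeasurableSet.iUnion fun _ => hE'meas p
    -- integrability facts
    haveI := hγP
    have hintLν : Integrable (fun y => L F' y) ν :=
      Integrable.mono' (integrable_const M) (hLFc F').measurable.aestronglyMeasurable
        (ae_of_all _ fun y => hM (F', y) (mem_univ _))
    have hintg1 : Integrable (fun y => L F' (T' y)) (ρ k) :=
      Integrable.mono' (integrable_const M)
        ((hLFc F').measurable.comp hT'meas).aestronglyMeasurable
        (ae_of_all _ fun y => hM (F', T' y) (mem_univ _))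
    have hintg2 : Integrable (fun y : Ω => costf (T' y, y)) (ρ k) := by
      refine Integrable.mono' (integrable_const (D^2)) ?_ (ae_of_all _ fun y => hcost_bdd (T' y, y))
      exact (hcost_cont.measurable.comp (hT'meas.prodMk measurable_id)).aestronglyMeasurable
    have hintcost : Integrable costf γ :=
      Integrable.mono' (integrable_const (D^2)) hcost_cont.measurable.aestronglyMeasurable
        (ae_of_all _ hcost_bdd)
    -- (i) the value of the mapped measure
    have hIint : ∫ z, L F' z ∂((ρ k).map T')
        = ∑ p : Fin n × Fin n, (m p).toReal * L F' (x p.1) := by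
      rw [integral_map hT'meas.aemeasurable
        (hLFc F').stronglyMeasurable.aestronglyMeasurable]
      have h1 : ∫ y, L F' (T' y) ∂(ρ k) = ∫ y in ⋃ p, E' p, L F' (T' y) ∂(ρ k) := by
        rw [hE'univ, Measure.restrict_univ]
      rw [h1, integral_iUnion hE'meas hE'disj
        (by rw [hE'univ]; exact (integrableOn_univ).mpr hintg1), tsum_fintype]
      refine Finset.sum_congr rfl fun p _ => ?_
      rw [setIntegral_congr_fun (hE'meas p) (fun y hy => by rw [hT'mem p y hy]),
        setIntegral_const, smul_eq_mul, measureReal_def, hE'val p]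
    -- (ii) splitting the transport cost
    have hTcost : transportCost T' (ρ k)
        ≤ ∑ p : Fin n × Fin n, (m p).toReal * ((dist (x p.1) (x p.2) + δ)^2) := by
      have h0 : transportCost T' (ρ k) = ∫ y, costf (T' y, y) ∂(ρ k) := rfl
      have h1 : ∫ y, costf (T' y, y) ∂(ρ k) = ∫ y in ⋃ p, E' p, costf (T' y, y) ∂(ρ k) := by
        rw [hE'univ, Measure.restrict_univ]
      rw [h0, h1, integral_iUnion hE'meas hE'disj
        (by rw [hE'univ]; exact (integrableOn_univ).mpr hintg2), tsum_fintype]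
      refine Finset.sum_le_sum fun p _ => ?_
      have hcongr : ∫ y in E' p, costf (T' y, y) ∂(ρ k)
          = ∫ y in E' p, (dist (x p.1) y)^2 ∂(ρ k) := by
        refine setIntegral_congr_fun (hE'meas p) fun y hy => ?_
        rw [hT'mem p y hy, hcost_eq_dist]
      rw [hcongr]
      have hmono : ∫ y in E' p, (dist (x p.1) y)^2 ∂(ρ k)
          ≤ ∫ y in E' p, ((dist (x p.1) (x p.2) + δ)^2) ∂(ρ k) := by
        refine setIntegral_mono_on ?_ ?_ (hE'meas p) ?_
        · refine Integrable.integrableOn ?_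
          refine Integrable.mono' (integrable_const (D^2))
            ((continuous_const.dist continuous_id).pow 2).measurable.aestronglyMeasurable
            (ae_of_all _ fun y => ?_)
          rw [Real.norm_eq_abs, abs_of_nonneg (by positivity)]
          exact pow_le_pow_left₀ dist_nonneg (hD _ _) 2
        · exact integrableOn_const (measure_ne_top _ _)
        · intro y hy
          have hdy : dist y (x p.2) < δ := hCdist p.2 y (hE'sub p hy)
          have htri : dist (x p.1) y ≤ dist (x p.1) (x p.2) + dist (x p.2) y :=
            dist_triangle _ _ _
          rw [dist_comm (x p.2) y] at htri
          exact pow_le_pow_left₀ dist_nonneg (by linarith) 2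
      calc ∫ y in E' p, (dist (x p.1) y)^2 ∂(ρ k)
          ≤ ∫ y in E' p, ((dist (x p.1) (x p.2) + δ)^2) ∂(ρ k) := hmono
        _ = (m p).toReal * ((dist (x p.1) (x p.2) + δ)^2) := by
            rw [setIntegral_const, smul_eq_mul, measureReal_def, hE'val p]
    -- (iii) per-cell comparison with the coupling cost
    have hcell : ∀ p : Fin n × Fin n,
        (m p).toReal * ((dist (x p.1) (x p.2) + δ)^2)
          ≤ (∫ q in C p.1 ×ˢ C p.2, costf q ∂γ) + (m p).toReal * (δ * (6*D + 9)) := by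
      intro p
      have hconst : (m p).toReal * ((dist (x p.1) (x p.2) + δ)^2)
          = ∫ q in C p.1 ×ˢ C p.2, ((dist (x p.1) (x p.2) + δ)^2) ∂γ := by
        rw [setIntegral_const, smul_eq_mul, hmdef, measureReal_def]
      rw [hconst]
      have hmono : ∫ q in C p.1 ×ˢ C p.2, ((dist (x p.1) (x p.2) + δ)^2) ∂γ
          ≤ ∫ q in C p.1 ×ˢ C p.2, (costf q + δ * (6*D + 9)) ∂γ := by
        refine setIntegral_mono_on (integrableOn_const (measure_ne_top _ _))
          ((hintcost.add (integrable_const _)).integrableOn) (hCm2 p) ?_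
        rintro ⟨a, b⟩ ⟨ha, hb⟩
        have h1 : dist a (x p.1) < δ := hCdist p.1 a ha
        have h2 : dist b (x p.2) < δ := hCdist p.2 b hb
        have h3 : dist (x p.1) (x p.2) ≤ dist a b + 2*δ := by
          have h4 := dist_triangle4 (x p.1) a b (x p.2)
          rw [dist_comm (x p.1) a] at h4
          linarith
        have h5 : costf (a, b) = dist a b ^ 2 := hcost_eq_dist (a, b)
        have h6 : dist a b ≤ D := hD a b
        have h7 : (0:ℝ) ≤ dist a b := dist_nonneg
        have h8 : (0:ℝ) ≤ dist (x p.1) (x p.2) := dist_nonneg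
        rw [h5]
        have h9 : (dist (x p.1) (x p.2) + δ)^2 ≤ (dist a b + 3*δ)^2 := by
          apply pow_le_pow_left₀ (by positivity)
          linarith
        nlinarith [hδpos.le, hδ1', hDpos, mul_nonneg hδpos.le h7,
          mul_le_mul_of_nonneg_left h6 (by positivity : (0:ℝ) ≤ 6*δ),
          mul_le_mul_of_nonneg_left hδ1' (by positivity : (0:ℝ) ≤ 9*δ)]
      calc ∫ q in C p.1 ×ˢ C p.2, ((dist (x p.1) (x p.2) + δ)^2) ∂γ
          ≤ ∫ q in C p.1 ×ˢ C p.2, (costf q + δ * (6*D + 9)) ∂γ := hmono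
        _ = (∫ q in C p.1 ×ˢ C p.2, costf q ∂γ) + (m p).toReal * (δ * (6*D + 9)) := by
            rw [integral_add hintcost.integrableOn
              (integrableOn_const (measure_ne_top _ _)),
              setIntegral_const, smul_eq_mul, hmdef, measureReal_def]
    -- (iv) total coupling cost and total mass
    have hsum_cost : ∑ p : Fin n × Fin n, ∫ q in C p.1 ×ˢ C p.2, costf q ∂γ
        = ∫ q, costf q ∂γ := by
      have h1 : ∫ q, costf q ∂γ = ∫ q in ⋃ p : Fin n × Fin n, C p.1 ×ˢ C p.2, costf q ∂γ := by
        rw [hCu2, Measure.restrict_univ]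
      rw [h1, integral_iUnion hCm2 hCd2
        (by rw [hCu2]; exact (integrableOn_univ).mpr hintcost), tsum_fintype]
    have hsum_m : ∑ p : Fin n × Fin n, (m p).toReal = 1 := by
      have h1 : ∑ p : Fin n × Fin n, m p = 1 := by
        rw [← tsum_fintype (L := SummationFilter.unconditional _), ← measure_iUnion hCd2 hCm2, hCu2, measure_univ]
      rw [← ENNReal.toReal_sum (fun p _ => hmne p), h1, ENNReal.toReal_one]
    -- (v) value comparison with ν
    have hval : ∑ p : Fin n × Fin n, (m p).toReal * L F' (x p.1)
        ≤ (∫ y, L F' y ∂ν) + ε := by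
      have hsum1 : ∑ p : Fin n × Fin n, (m p).toReal * L F' (x p.1)
          = ∑ i, (ν (C i)).toReal * L F' (x i) := by
        rw [Fintype.sum_prod_type]
        refine Finset.sum_congr rfl fun i _ => ?_
        have hred : ∀ j : Fin n, (m (i, j)).toReal * L F' (x (i, j).1)
            = (m (i, j)).toReal * L F' (x i) := fun j => rfl
        rw [Finset.sum_congr rfl (fun j _ => hred j), ← Finset.sum_mul,
          ← ENNReal.toReal_sum (fun j _ => hmne (i, j)), hrow i]
      rw [hsum1]
      have hterm : ∀ i : Fin n, (ν (C i)).toReal * L F' (x i)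
          ≤ ∫ y in C i, (L F' y + ε) ∂ν := by
        intro i
        have h1 : (ν (C i)).toReal * L F' (x i) = ∫ _ in C i, L F' (x i) ∂ν := by
          rw [setIntegral_const, smul_eq_mul, measureReal_def]
        rw [h1]
        refine setIntegral_mono_on (integrableOn_const (measure_ne_top _ _))
          ((hintLν.add (integrable_const _)).integrableOn) (hCmeas i) ?_
        intro y hy
        have hdy : dist (x i) y < δ1 := by
          rw [dist_comm]
          exact lt_of_lt_of_le (hCdist i y hy) hδδ1
        have habs := hLpt F' (x i) y hdy
        rw [abs_sub_lt_iff] at habs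
        linarith [habs.1]
      calc ∑ i, (ν (C i)).toReal * L F' (x i)
          ≤ ∑ i, ∫ y in C i, (L F' y + ε) ∂ν := Finset.sum_le_sum fun i _ => hterm i
        _ = ∫ y, (L F' y + ε) ∂ν := by
            rw [← tsum_fintype (L := SummationFilter.unconditional _), ← integral_iUnion hCmeas hCdisj
              (by rw [hCuniv]; exact (integrableOn_univ).mpr (hintLν.add (integrable_const _))),
              hCuniv, Measure.restrict_univ]
        _ = (∫ y, L F' y ∂ν) + ε := by
            rw [integral_add hintLν (integrable_const _), integral_const]
            simp
    -- assemble everything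
    have hmain := hmin k hk1 hkK T' hT'meas F'
    have hstep1 : (⨅ F'' : 𝓕, ∫ z, L F'' z ∂(ρ (k + 1))) + c * W2sq (ρ (k + 1)) (ρ k)
        ≤ (∫ z, L (F k) z ∂(ρ (k+1))) + c * transportCost (T k) (ρ k) :=
      add_le_add hZ1le (mul_le_mul_of_nonneg_left hW2le hcpos.le)
    rw [← hstep k hk1 hkK] at hmain
    have hstep2 := hstep1.trans hmain
    have hcost_sum : transportCost T' (ρ k) ≤ (∫ q, costf q ∂γ) + δ * (6*D + 9) := by
      calc transportCost T' (ρ k)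
          ≤ ∑ p : Fin n × Fin n, (m p).toReal * ((dist (x p.1) (x p.2) + δ)^2) := hTcost
        _ ≤ ∑ p : Fin n × Fin n,
            ((∫ q in C p.1 ×ˢ C p.2, costf q ∂γ) + (m p).toReal * (δ * (6*D + 9))) :=
            Finset.sum_le_sum fun p _ => hcell p
        _ = (∫ q, costf q ∂γ) + δ * (6*D + 9) := by
            rw [Finset.sum_add_distrib, hsum_cost, ← Finset.sum_mul, hsum_m, one_mul]
    have hγlt : ∫ q, costf q ∂γ < W2sq ν (ρ k) + ε := hrlt
    have hIle : ∫ z, L F' z ∂((ρ k).map T') ≤ (∫ y, L F' y ∂ν) + ε := by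
      rw [hIint]; exact hval
    have hνle : ∫ y, L F' y ∂ν < (⨅ F'' : 𝓕, ∫ z, L F'' z ∂ν) + ε := hF'
    have hc1 : c * transportCost T' (ρ k) ≤ c * ((∫ q, costf q ∂γ) + δ * (6*D + 9)) :=
      mul_le_mul_of_nonneg_left hcost_sum hcpos.le
    have hc2 : c * (∫ q, costf q ∂γ) ≤ c * (W2sq ν (ρ k) + ε) :=
      mul_le_mul_of_nonneg_left hγlt.le hcpos.le
    have hfinal : (∫ z, L F' z ∂((ρ k).map T')) + c * transportCost T' (ρ k)
        ≤ (⨅ F'' : 𝓕, ∫ z, L F'' z ∂ν) + c * W2sq ν (ρ k) + (3 + c) * ε := by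
      have e1 : c * ((∫ q, costf q ∂γ) + δ * (6*D + 9))
          = c * (∫ q, costf q ∂γ) + c * (δ * (6*D + 9)) := by ring
      have e2 : c * (W2sq ν (ρ k) + ε) = c * W2sq ν (ρ k) + c * ε := by ring
      nlinarith [hδε, hIle, hνle, hc1, hc2]
    exact hstep2.trans hfinal

  -- conclude
  apply _root_.le_of_forall_pos_le_add
  intro ε' hε'
  have h3c : (0:ℝ) < 3 + c := by linarith
  have hk := key (ε' / (3 + c)) (by positivity)
  calc (⨅ F' : 𝓕, ∫ x, L F' x ∂(ρ (k + 1))) + c * W2sq (ρ (k + 1)) (ρ k)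
      ≤ (⨅ F' : 𝓕, ∫ x, L F' x ∂ν) + c * W2sq ν (ρ k) + (3 + c) * (ε' / (3 + c)) := hk
    _ = (⨅ F' : 𝓕, ∫ x, L F' x ∂ν) + c * W2sq ν (ρ k) + ε' := by
        rw [mul_div_cancel₀ _ h3c.ne']
end

section
/- (Proposition 2, existence.) Let μ be an absolutely continuous Borel probability measure on Ω with μ(∂Ω) = 0 and let τ > 0. Then the problem of minimizing (T, F) ↦ 𝓛(F, T_♯μ) + (1/(2τ)) ∫_Ω ‖T(x) − x‖² dμ(x) over Borel measurable maps T : Ω → Ω and F ∈ 𝓕 admits a minimizer (T*, F*) such that T* is an optimal transport map from μ to T*_♯μ, i.e. ∫_Ω ‖T*(x) − x‖² dμ(x) = W2²(μ, T*_♯μ). -/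
open MeasureTheory
open scoped RealInnerProductSpace

lemma gradient_eq_of_support {E : Type*} [NormedAddCommGroup E] [InnerProductSpace ℝ E]
    [CompleteSpace E]
    {f : E → ℝ} {x y0 : E} (hdiff : DifferentiableAt ℝ f x)
    (hsupp : ∀ v, f x + ⟪v - x, y0⟫ ≤ f v) :
    gradient f x = y0 := by
  have hinner : HasFDerivAt (fun v : E => ⟪v, y0⟫) (innerSL ℝ y0) x := by
    have : (fun v : E => ⟪v, y0⟫) = fun v => (innerSL ℝ y0) v := by
      ext v; simp [real_inner_comm]
    rw [this]
    exact (innerSL ℝ y0).hasFDerivAt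
  have hψ : HasFDerivAt (fun v => f v - ⟪v, y0⟫) (fderiv ℝ f x - innerSL ℝ y0) x :=
    hdiff.hasFDerivAt.sub hinner
  have hmin : IsLocalMin (fun v => f v - ⟪v, y0⟫) x := by
    have hmo : IsMinOn (fun v => f v - ⟪v, y0⟫) Set.univ x := by
      intro v _
      have := hsupp v
      simp only [inner_sub_left] at this
      simp only [Set.mem_setOf_eq]
      linarith
    exact hmo.isLocalMin Filter.univ_mem
  have h0 : fderiv ℝ f x - innerSL ℝ y0 = 0 := hmin.hasFDerivAt_eq_zero hψ
  have hf' : fderiv ℝ f x = innerSL ℝ y0 := by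
    rwa [sub_eq_zero] at h0
  have : HasGradientAt f y0 x := by
    rw [hasGradientAt_iff_hasFDerivAt]
    have h2 := hdiff.hasFDerivAt
    rw [hf'] at h2
    refine h2.congr_fderiv ?_
    ext v
    simp [InnerProductSpace.toDual_apply_apply, real_inner_comm]
  exact this.gradient

lemma integrable_of_bdd' {α : Type*} [MeasurableSpace α] {μ : Measure α} [IsFiniteMeasure μ]
    {f : α → ℝ} (hf : AEStronglyMeasurable f μ) {C : ℝ} (h : ∀ x, |f x| ≤ C) :
    Integrable f μ :=
  ⟨hf, HasFiniteIntegral.of_bounded (μ := μ) (C := C)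
    (ae_of_all _ (fun x => by simpa [Real.norm_eq_abs] using h x))⟩

lemma integrable_cont' {α : Type*} [MeasurableSpace α] [TopologicalSpace α]
    [OpensMeasurableSpace α] [CompactSpace α] {μ : Measure α} [IsFiniteMeasure μ]
    {f : α → ℝ} (hf : Continuous f) : Integrable f μ := by
  obtain ⟨C, hC⟩ := isBounded_iff_forall_norm_le.mp (isCompact_range hf).isBounded
  exact integrable_of_bdd' hf.measurable.aestronglyMeasurable (C := C)
    (fun x => by simpa [Real.norm_eq_abs] using hC _ (Set.mem_range_self x))


set_option maxHeartbeats 2000000 in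
/-- Proposition 2 (existence): the regularized problem admits a minimizer whose transport
component is an optimal transport map from `μ` to its pushforward. -/
theorem stmt4 {d : ℕ} (hd : 1 ≤ d) (Ω : Set (EuclideanSpace ℝ (Fin d)))
    (hconv : Convex ℝ Ω) (hcomp : IsCompact Ω)
    (hfront : volume (frontier Ω) = 0)
    (𝓕 : Type*) [MetricSpace 𝓕] [CompactSpace 𝓕] [Nonempty 𝓕]
    (L : 𝓕 → Ω → ℝ) (hLcont : Continuous fun p : 𝓕 × Ω => L p.1 p.2)
    (hLnonneg : ∀ F x, 0 ≤ L F x)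
    (μ : Measure Ω) (hμ : IsProbabilityMeasure μ)
    (hac : μ.map (Subtype.val : Ω → EuclideanSpace ℝ (Fin d)) ≪ volume)
    (hμfront : μ.map (Subtype.val : Ω → EuclideanSpace ℝ (Fin d)) (frontier Ω) = 0)
    (τ : ℝ) (hτ : 0 < τ) :
    ∃ (Tstar : Ω → Ω) (Fstar : 𝓕), Measurable Tstar ∧
      (∀ (T : Ω → Ω), Measurable T → ∀ F : 𝓕,
        (∫ x, L Fstar x ∂(μ.map Tstar)) + (1 / (2 * τ)) * transportCost Tstar μ
          ≤ (∫ x, L F x ∂(μ.map T)) + (1 / (2 * τ)) * transportCost T μ) ∧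
      transportCost Tstar μ = W2sq μ (μ.map Tstar) := by
  classical
  have hΩne : Nonempty Ω := by
    by_contra h
    rw [not_nonempty_iff] at h
    have : μ Set.univ = 0 := by simp [Set.univ_eq_empty_iff.mpr h]
    simp [hμ.measure_univ] at this
  obtain ⟨y₀⟩ := id hΩne
  have : CompactSpace Ω := isCompact_iff_compactSpace.mp hcomp
  obtain ⟨R0, hR0⟩ := isBounded_iff_forall_norm_le.mp hcomp.isBounded
  set R : ℝ := max R0 0 with hRdef
  have hR : ∀ y : Ω, ‖(y : EuclideanSpace ℝ (Fin d))‖ ≤ R :=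
    fun y => le_max_of_le_left (hR0 _ y.2)
  have hRpos : 0 ≤ R := le_max_right _ _
  -- L continuity in second variable and bound
  have hLc : ∀ F, Continuous (L F) := fun F =>
    hLcont.comp (Continuous.prodMk_right F)
  obtain ⟨CL, hCL⟩ := isBounded_iff_forall_norm_le.mp (isCompact_range hLcont).isBounded
  have hCL' : ∀ F y, |L F y| ≤ CL := fun F y => by
    simpa [Real.norm_eq_abs] using hCL _ (Set.mem_range_self (F, y))
  -- the functions
  set φ : 𝓕 → Ω → ℝ := fun F y => τ * L F y + ‖(y : EuclideanSpace ℝ (Fin d))‖ ^ 2 / 2 with hφdef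
  have hφcont : ∀ F, Continuous (φ F) := fun F => by
    exact ((continuous_const.mul (hLc F)).add
      (((continuous_norm.comp continuous_subtype_val).pow 2).div_const 2))
  set g : 𝓕 → EuclideanSpace ℝ (Fin d) → Ω → ℝ :=
    fun F x y => ⟪x, (y : EuclideanSpace ℝ (Fin d))⟫ - φ F y with hgdef
  have hgcont : ∀ F x, Continuous (g F x) := fun F x =>
    ((continuous_const.inner continuous_subtype_val).sub (hφcont F))
  set hst : 𝓕 → EuclideanSpace ℝ (Fin d) → ℝ := fun F x => ⨆ y : Ω, g F x y with hstdef
  have hbdd : ∀ F x, BddAbove (Set.range (g F x)) := fun F x =>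
    (isCompact_range (hgcont F x)).bddAbove
  have hle : ∀ F x y, g F x y ≤ hst F x := fun F x y => le_ciSup (hbdd F x) y
  have hattain : ∀ F x, ∃ y : Ω, hst F x = g F x y := by
    intro F x
    obtain ⟨y, -, hy⟩ := isCompact_univ.exists_isMaxOn Set.univ_nonempty
      (hgcont F x).continuousOn
    exact ⟨y, le_antisymm (ciSup_le fun z => hy (Set.mem_univ z)) (hle F x y)⟩
  have hlip : ∀ F, LipschitzWith (Real.toNNReal R) (hst F) := by
    intro F
    apply LipschitzWith.of_dist_le_mul
    intro x x'
    rw [Real.dist_eq, Real.coe_toNNReal _ hRpos, dist_eq_norm]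
    have key : ∀ u v : EuclideanSpace ℝ (Fin d), hst F u - hst F v ≤ R * ‖u - v‖ := by
      intro u v
      obtain ⟨y, hy⟩ := hattain F u
      have h1 : g F u y - g F v y = ⟪u - v, (y : EuclideanSpace ℝ (Fin d))⟫ := by
        simp [hgdef, inner_sub_left]
      have h2 : ⟪u - v, (y : EuclideanSpace ℝ (Fin d))⟫ ≤ R * ‖u - v‖ := by
        calc ⟪u - v, (y : EuclideanSpace ℝ (Fin d))⟫ ≤ ‖u - v‖ * ‖(y : EuclideanSpace ℝ (Fin d))‖ :=
              real_inner_le_norm _ _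
          _ ≤ ‖u - v‖ * R := by
              exact mul_le_mul_of_nonneg_left (hR y) (norm_nonneg _)
          _ = R * ‖u - v‖ := mul_comm _ _
      have h3 : g F v y ≤ hst F v := hle F v y
      linarith [hy, h1, h2, h3]
    rw [abs_sub_le_iff]
    constructor
    · exact key x x'
    · calc hst F x' - hst F x ≤ R * ‖x' - x‖ := key x' x
        _ = R * ‖x - x'‖ := by rw [norm_sub_rev]
  -- the transport map candidates
  have hstc : ∀ F, Continuous (hst F) := fun F => (hlip F).continuous
  have hgradmeas : ∀ F, Measurable (fun x => gradient (hst F) x) := by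
    intro F
    have h1 : Measurable (fderiv ℝ (hst F)) := measurable_fderiv ℝ (hst F)
    exact ((InnerProductSpace.toDual ℝ (EuclideanSpace ℝ (Fin d))).symm.continuous.measurable).comp h1
  set A : 𝓕 → Set (EuclideanSpace ℝ (Fin d)) := fun F =>
    {x | DifferentiableAt ℝ (hst F) x} ∩ (fun x => gradient (hst F) x) ⁻¹' Ω with hAdef
  have hAmeas : ∀ F, MeasurableSet (A F) := fun F =>
    (measurableSet_of_differentiableAt ℝ (hst F)).inter
      ((hgradmeas F) (hcomp.isClosed.measurableSet))
  set T0 : 𝓕 → EuclideanSpace ℝ (Fin d) → EuclideanSpace ℝ (Fin d) :=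
    fun F x => if x ∈ A F then gradient (hst F) x else (y₀ : EuclideanSpace ℝ (Fin d)) with hT0def
  have hT0mem : ∀ F x, T0 F x ∈ Ω := by
    intro F x
    by_cases h : x ∈ A F
    · simpa [hT0def, h] using h.2
    · simp [hT0def, h, y₀.2]
  have hT0meas : ∀ F, Measurable (T0 F) := fun F =>
    Measurable.ite (hAmeas F) (hgradmeas F) measurable_const
  set TF : 𝓕 → Ω → Ω := fun F x => ⟨T0 F ↑x, hT0mem F ↑x⟩ with hTFdef
  have hTFmeas : ∀ F, Measurable (TF F) := fun F =>
    Measurable.subtype_mk ((hT0meas F).comp measurable_subtype_coe)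
  -- key pointwise property at differentiability points
  have hkey0 : ∀ F (x : Ω), DifferentiableAt ℝ (hst F) ↑x →
      hst F ↑x = g F ↑x (TF F x) := by
    intro F x hdiff
    obtain ⟨y, hy⟩ := hattain F ↑x
    have hsupp : ∀ v, hst F v ≥ hst F ↑x + ⟪v - ↑x, (y : EuclideanSpace ℝ (Fin d))⟫ := by
      intro v
      have h1 : g F v y ≤ hst F v := hle F v y
      have h2 : g F v y = g F ↑x y + ⟪v - ↑x, (y : EuclideanSpace ℝ (Fin d))⟫ := by
        simp only [hgdef, inner_sub_left]; ring
      rw [hy]; linarith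
    have hgrad : gradient (hst F) ↑x = (y : EuclideanSpace ℝ (Fin d)) :=
      gradient_eq_of_support hdiff (fun v => hsupp v)
    have hmemA : (x : EuclideanSpace ℝ (Fin d)) ∈ A F := by
      refine ⟨hdiff, ?_⟩
      simp only [Set.mem_preimage, hgrad]
      exact y.2
    have hT0x : T0 F ↑x = (y : EuclideanSpace ℝ (Fin d)) := by
      simp [hT0def, hmemA, hgrad]
    have : TF F x = y := Subtype.ext (by simp [hTFdef, hT0x])
    rw [this, hy]
  -- a.e. differentiability and the key identity
  have hdiffae : ∀ F, ∀ᵐ x : Ω ∂μ, DifferentiableAt ℝ (hst F) ↑x := by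
    intro F
    have h1 : ∀ᵐ x ∂(volume : Measure (EuclideanSpace ℝ (Fin d))),
        DifferentiableAt ℝ (hst F) x := (hlip F).ae_differentiableAt
    have h2 : ∀ᵐ x ∂(μ.map (Subtype.val : Ω → EuclideanSpace ℝ (Fin d))),
        DifferentiableAt ℝ (hst F) x := h1.filter_mono hac.ae_le
    rw [ae_map_iff measurable_subtype_coe.aemeasurable
      (measurableSet_of_differentiableAt ℝ (hst F))] at h2
    exact h2
  have hkey : ∀ F, ∀ᵐ x : Ω ∂μ, hst F ↑x = g F ↑x (TF F x) :=
    fun F => (hdiffae F).mono (fun x hx => hkey0 F x hx)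
  -- pointwise comparison with the objective integrand
  have hpt : ∀ F (x y : Ω),
      (1/τ) * (‖(x : EuclideanSpace ℝ (Fin d))‖^2/2 - hst F ↑x)
        ≤ L F y + (1/(2*τ)) * ‖((y : EuclideanSpace ℝ (Fin d)) - ↑x)‖^2 := by
    intro F x y
    have h1 : g F ↑x y ≤ hst F ↑x := hle F ↑x y
    have hexp : ‖((y : EuclideanSpace ℝ (Fin d)) - ↑x)‖^2
        = ‖(y : EuclideanSpace ℝ (Fin d))‖^2
          - 2*⟪(y : EuclideanSpace ℝ (Fin d)), (x : EuclideanSpace ℝ (Fin d))⟫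
          + ‖(x : EuclideanSpace ℝ (Fin d))‖^2 := norm_sub_sq_real _ _
    have hsym : ⟪(x : EuclideanSpace ℝ (Fin d)), (y : EuclideanSpace ℝ (Fin d))⟫
        = ⟪(y : EuclideanSpace ℝ (Fin d)), (x : EuclideanSpace ℝ (Fin d))⟫ := real_inner_comm _ _
    have hb : L F y + (1/(2*τ)) * ‖((y : EuclideanSpace ℝ (Fin d)) - ↑x)‖^2
        = (1/τ) * (τ * L F y + ‖((y : EuclideanSpace ℝ (Fin d)) - ↑x)‖^2/2) := by
      field_simp
    rw [hb]
    apply mul_le_mul_of_nonneg_left _ (by positivity : (0:ℝ) ≤ 1/τ)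
    simp only [hgdef, hφdef] at h1
    rw [hexp]
    linarith
  have hpteq : ∀ F (x : Ω), hst F ↑x = g F ↑x (TF F x) →
      L F (TF F x) + (1/(2*τ)) * ‖((TF F x : EuclideanSpace ℝ (Fin d)) - ↑x)‖^2
        = (1/τ) * (‖(x : EuclideanSpace ℝ (Fin d))‖^2/2 - hst F ↑x) := by
    intro F x hx
    have hexp : ‖((TF F x : EuclideanSpace ℝ (Fin d)) - ↑x)‖^2
        = ‖(TF F x : EuclideanSpace ℝ (Fin d))‖^2
          - 2*⟪(TF F x : EuclideanSpace ℝ (Fin d)), (x : EuclideanSpace ℝ (Fin d))⟫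
          + ‖(x : EuclideanSpace ℝ (Fin d))‖^2 := norm_sub_sq_real _ _
    have hsym : ⟪(x : EuclideanSpace ℝ (Fin d)), (TF F x : EuclideanSpace ℝ (Fin d))⟫
        = ⟪(TF F x : EuclideanSpace ℝ (Fin d)), (x : EuclideanSpace ℝ (Fin d))⟫ :=
      real_inner_comm _ _
    have hcoe : ((TF F x : EuclideanSpace ℝ (Fin d))) = T0 F ↑x := rfl
    simp only [hgdef, hφdef] at hx
    have hb : L F (TF F x) + (1/(2*τ)) * ‖((TF F x : EuclideanSpace ℝ (Fin d)) - ↑x)‖^2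
        = (1/τ) * (τ * L F (TF F x)
            + ‖((TF F x : EuclideanSpace ℝ (Fin d)) - ↑x)‖^2/2) := by
      field_simp
    rw [hb]
    apply congrArg
    rw [hexp]
    linarith
  -- integrability facts
  have hIL : ∀ (T : Ω → Ω), Measurable T → ∀ F, Integrable (fun x => L F (T x)) μ :=
    fun T hT F => integrable_of_bdd' (((hLc F).measurable.comp hT).aestronglyMeasurable)
      (fun x => hCL' F (T x))
  have hIcost : ∀ (T : Ω → Ω), Measurable T →
      Integrable (fun x : Ω => ‖((T x : EuclideanSpace ℝ (Fin d)) - ↑x)‖^2) μ := by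
    intro T hT
    refine integrable_of_bdd' (C := (2*R)^2) ?_ ?_
    · apply Measurable.aestronglyMeasurable
      apply Measurable.pow_const
      exact (measurable_subtype_coe.comp hT).sub measurable_subtype_coe |>.norm
    · intro x
      rw [abs_of_nonneg (by positivity)]
      have h1 : ‖((T x : EuclideanSpace ℝ (Fin d)) - ↑x)‖ ≤ 2*R := by
        calc ‖((T x : EuclideanSpace ℝ (Fin d)) - ↑x)‖
            ≤ ‖(T x : EuclideanSpace ℝ (Fin d))‖ + ‖(x : EuclideanSpace ℝ (Fin d))‖ :=
              norm_sub_le _ _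
          _ ≤ R + R := add_le_add (hR (T x)) (hR x)
          _ = 2*R := by ring
      exact pow_le_pow_left₀ (norm_nonneg _) h1 2
  have hIm : ∀ F, Integrable (fun x : Ω =>
      (1/τ) * (‖(x : EuclideanSpace ℝ (Fin d))‖^2/2 - hst F ↑x)) μ := by
    intro F
    apply integrable_cont'
    exact continuous_const.mul
      ((((continuous_norm.comp continuous_subtype_val).pow 2).div_const 2).sub
        ((hstc F).comp continuous_subtype_val))
  -- rewrite the objective
  have hJeq : ∀ (T : Ω → Ω), Measurable T → ∀ F,
      (∫ x, L F x ∂(μ.map T)) + (1/(2*τ)) * transportCost T μ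
        = ∫ x, (L F (T x)
            + (1/(2*τ)) * ‖((T x : EuclideanSpace ℝ (Fin d)) - ↑x)‖^2) ∂μ := by
    intro T hT F
    rw [integral_map hT.aemeasurable (hLc F).aestronglyMeasurable, transportCost,
      ← integral_const_mul, ← integral_add (hIL T hT F) ((hIcost T hT).const_mul _)]
  set m : 𝓕 → ℝ := fun F =>
    ∫ x : Ω, (1/τ) * (‖(x : EuclideanSpace ℝ (Fin d))‖^2/2 - hst F ↑x) ∂μ with hmdef
  have hJge : ∀ (T : Ω → Ω), Measurable T → ∀ F,
      m F ≤ (∫ x, L F x ∂(μ.map T)) + (1/(2*τ)) * transportCost T μ := by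
    intro T hT F
    rw [hJeq T hT F]
    exact integral_mono (hIm F) ((hIL T hT F).add ((hIcost T hT).const_mul _))
      (fun x => hpt F x (T x))
  have hJTF : ∀ F, (∫ x, L F x ∂(μ.map (TF F))) + (1/(2*τ)) * transportCost (TF F) μ = m F := by
    intro F
    rw [hJeq (TF F) (hTFmeas F) F]
    exact integral_congr_ae ((hkey F).mono (fun x hx => hpteq F x hx))
  -- continuity of m
  have hmc : Continuous m := by
    rw [Metric.continuous_iff]
    intro F₁ ε hε
    have hUC := CompactSpace.uniformContinuous_of_continuous hLcont
    rw [Metric.uniformContinuous_iff] at hUC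
    obtain ⟨δ, hδ, hδ'⟩ := hUC (ε/2) (by positivity)
    refine ⟨δ, hδ, ?_⟩
    intro F₂ hFdist
    have hLclose : ∀ (Fa Fb : 𝓕), dist Fa Fb < δ → ∀ y : Ω, |L Fa y - L Fb y| < ε/2 := by
      intro Fa Fb hab y
      have hd2 : dist ((Fa, y) : 𝓕 × Ω) (Fb, y) < δ := by
        rw [Prod.dist_eq]; exact max_lt hab (by simpa using hδ)
      have := hδ' hd2
      rwa [Real.dist_eq] at this
    have hstclose : ∀ (Fa Fb : 𝓕), dist Fa Fb < δ →
        ∀ x : EuclideanSpace ℝ (Fin d), hst Fa x - hst Fb x ≤ τ * (ε/2) := by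
      intro Fa Fb hab x
      obtain ⟨y, hy⟩ := hattain Fa x
      have h1 : g Fa x y - g Fb x y = τ * (L Fb y - L Fa y) := by
        simp only [hgdef, hφdef]; ring
      have h2 : L Fb y - L Fa y ≤ ε/2 := by
        have := hLclose Fb Fa (by rwa [dist_comm]) y
        cases abs_lt.mp this; linarith
      have h3 : g Fb x y ≤ hst Fb x := hle Fb x y
      have h4 : τ * (L Fb y - L Fa y) ≤ τ * (ε/2) :=
        mul_le_mul_of_nonneg_left h2 (le_of_lt hτ)
      linarith [hy]
    have habs : ∀ x : Ω, |(1/τ) * (‖(x : EuclideanSpace ℝ (Fin d))‖^2/2 - hst F₂ ↑x)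
        - (1/τ) * (‖(x : EuclideanSpace ℝ (Fin d))‖^2/2 - hst F₁ ↑x)| ≤ ε/2 := by
      intro x
      have h1 : (1/τ) * (‖(x : EuclideanSpace ℝ (Fin d))‖^2/2 - hst F₂ ↑x)
          - (1/τ) * (‖(x : EuclideanSpace ℝ (Fin d))‖^2/2 - hst F₁ ↑x)
          = (1/τ) * (hst F₁ ↑x - hst F₂ ↑x) := by ring
      rw [h1, abs_mul, abs_of_nonneg (by positivity : (0:ℝ) ≤ 1/τ)]
      have h2 : |hst F₁ ↑x - hst F₂ ↑x| ≤ τ * (ε/2) := by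
        rw [abs_sub_le_iff]
        exact ⟨hstclose F₁ F₂ (by rwa [dist_comm]) ↑x, hstclose F₂ F₁ hFdist ↑x⟩
      calc (1/τ) * |hst F₁ ↑x - hst F₂ ↑x| ≤ (1/τ) * (τ * (ε/2)) :=
            mul_le_mul_of_nonneg_left h2 (by positivity)
        _ = ε/2 := by field_simp
    have hsub : m F₂ - m F₁ = ∫ x : Ω,
        ((1/τ) * (‖(x : EuclideanSpace ℝ (Fin d))‖^2/2 - hst F₂ ↑x)
          - (1/τ) * (‖(x : EuclideanSpace ℝ (Fin d))‖^2/2 - hst F₁ ↑x)) ∂μ := by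
      rw [hmdef, ← integral_sub (hIm F₂) (hIm F₁)]
    have hbound : dist (m F₂) (m F₁) ≤ ε/2 := by
      rw [Real.dist_eq, hsub]
      calc |∫ x : Ω, ((1/τ) * (‖(x : EuclideanSpace ℝ (Fin d))‖^2/2 - hst F₂ ↑x)
            - (1/τ) * (‖(x : EuclideanSpace ℝ (Fin d))‖^2/2 - hst F₁ ↑x)) ∂μ|
          ≤ ∫ x : Ω, |(1/τ) * (‖(x : EuclideanSpace ℝ (Fin d))‖^2/2 - hst F₂ ↑x)
            - (1/τ) * (‖(x : EuclideanSpace ℝ (Fin d))‖^2/2 - hst F₁ ↑x)| ∂μ :=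
            by exact
              norm_integral_le_integral_norm (μ := μ)
                (fun x : Ω => (1/τ) * (‖(x : EuclideanSpace ℝ (Fin d))‖^2/2 - hst F₂ ↑x)
                  - (1/τ) * (‖(x : EuclideanSpace ℝ (Fin d))‖^2/2 - hst F₁ ↑x))
        _ ≤ ∫ _x : Ω, (ε/2) ∂μ := by
            apply integral_mono ((hIm F₂).sub (hIm F₁)).abs (integrable_const _)
            exact habs
        _ = ε/2 := by simp [hμ.measure_univ]
    linarith
  -- choose the minimizing F
  obtain ⟨Fstar, -, hFmin0⟩ := isCompact_univ.exists_isMinOn Set.univ_nonempty hmc.continuousOn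
  have hFmin : ∀ F, m Fstar ≤ m F := fun F => hFmin0 (Set.mem_univ F)
  set Tstar := TF Fstar with hTstardef
  have hmin : ∀ (T : Ω → Ω), Measurable T → ∀ F : 𝓕,
      (∫ x, L Fstar x ∂(μ.map Tstar)) + (1 / (2 * τ)) * transportCost Tstar μ
        ≤ (∫ x, L F x ∂(μ.map T)) + (1 / (2 * τ)) * transportCost T μ := by
    intro T hT F
    calc (∫ x, L Fstar x ∂(μ.map Tstar)) + (1 / (2 * τ)) * transportCost Tstar μ
        = m Fstar := hJTF Fstar
      _ ≤ m F := hFmin F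
      _ ≤ _ := hJge T hT F
  -- optimality of the transport map
  refine ⟨Tstar, Fstar, hTFmeas Fstar, hmin, ?_⟩
  set ν := μ.map Tstar with hνdef
  have hνprob : IsProbabilityMeasure ν := Measure.isProbabilityMeasure_map (hTFmeas Fstar).aemeasurable
  have hpairmeas : Measurable (fun x : Ω => (x, Tstar x)) :=
    measurable_id.prodMk (hTFmeas Fstar)
  set γ0 : Measure (Ω × Ω) := μ.map (fun x => (x, Tstar x)) with hγ0def
  have hγ0prob : IsProbabilityMeasure γ0 := Measure.isProbabilityMeasure_map hpairmeas.aemeasurable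
  have hγ0fst : γ0.map Prod.fst = μ := by
    rw [hγ0def, Measure.map_map measurable_fst hpairmeas]
    have : (Prod.fst ∘ fun x : Ω => (x, Tstar x)) = id := rfl
    rw [this, Measure.map_id]
  have hγ0snd : γ0.map Prod.snd = ν := by
    rw [hγ0def, hνdef, Measure.map_map measurable_snd hpairmeas]
    rfl
  have hacont : Continuous (fun p : Ω × Ω =>
      ‖(p.1 : EuclideanSpace ℝ (Fin d)) - (p.2 : EuclideanSpace ℝ (Fin d))‖ ^ 2) :=
    (((continuous_subtype_val.comp continuous_fst).sub
      (continuous_subtype_val.comp continuous_snd)).norm).pow 2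
  have hcosteq : transportCost Tstar μ = ∫ p, ‖(p.1 : EuclideanSpace ℝ (Fin d))
      - (p.2 : EuclideanSpace ℝ (Fin d))‖ ^ 2 ∂γ0 := by
    rw [hγ0def, integral_map hpairmeas.aemeasurable hacont.aestronglyMeasurable, transportCost]
    refine integral_congr_ae (ae_of_all _ fun x => ?_)
    show ‖(Tstar x : EuclideanSpace ℝ (Fin d)) - (x : EuclideanSpace ℝ (Fin d))‖ ^ 2
      = ‖(x : EuclideanSpace ℝ (Fin d)) - (Tstar x : EuclideanSpace ℝ (Fin d))‖ ^ 2
    rw [norm_sub_rev]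
  have hW2le : W2sq μ ν ≤ transportCost Tstar μ := by
    rw [W2sq]
    apply csInf_le
    · refine ⟨0, fun c hc => ?_⟩
      obtain ⟨γ, hγp, -, -, hceq⟩ := hc
      rw [hceq]
      exact integral_nonneg (fun p => by positivity)
    · exact ⟨γ0, hγ0prob, hγ0fst, hγ0snd, hcosteq⟩
  -- lower bound : every coupling costs at least the map cost
  have hI5eq : ∀ᵐ x : Ω ∂μ, ⟪(Tstar x : EuclideanSpace ℝ (Fin d)), (x : EuclideanSpace ℝ (Fin d))⟫
      = hst Fstar ↑x + φ Fstar (Tstar x) := by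
    filter_upwards [hkey Fstar] with x hx
    have : hst Fstar ↑x = ⟪(x : EuclideanSpace ℝ (Fin d)), (Tstar x : EuclideanSpace ℝ (Fin d))⟫
        - φ Fstar (Tstar x) := hx
    rw [real_inner_comm]
    linarith
  -- integrability over μ of the relevant functions
  have hμI1 : Integrable (fun x : Ω => ‖(x : EuclideanSpace ℝ (Fin d))‖ ^ 2) μ :=
    integrable_cont' ((continuous_norm.comp continuous_subtype_val).pow 2)
  have hμI2 : Integrable (fun x : Ω => ‖(Tstar x : EuclideanSpace ℝ (Fin d))‖ ^ 2) μ := by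
    refine integrable_of_bdd' (C := R^2) ?_ ?_
    · exact (((measurable_subtype_coe.comp (hTFmeas Fstar)).norm).pow_const 2).aestronglyMeasurable
    · intro x
      rw [abs_of_nonneg (by positivity)]
      exact pow_le_pow_left₀ (norm_nonneg _) (hR (Tstar x)) 2
  have hμI3 : Integrable (fun x : Ω => hst Fstar ↑x) μ :=
    integrable_cont' ((hstc Fstar).comp continuous_subtype_val)
  have hμI4 : Integrable (fun x : Ω => φ Fstar (Tstar x)) μ := by
    obtain ⟨C, hC⟩ := isBounded_iff_forall_norm_le.mp (isCompact_range (hφcont Fstar)).isBounded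
    refine integrable_of_bdd' (C := C) ?_ ?_
    · exact ((hφcont Fstar).measurable.comp (hTFmeas Fstar)).aestronglyMeasurable
    · intro x
      simpa [Real.norm_eq_abs] using hC _ (Set.mem_range_self (Tstar x))
  have hμI5 : Integrable (fun x : Ω => ⟪(Tstar x : EuclideanSpace ℝ (Fin d)),
      (x : EuclideanSpace ℝ (Fin d))⟫) μ := by
    refine integrable_of_bdd' (C := R * R) ?_ ?_
    · apply Measurable.aestronglyMeasurable
      exact Measurable.inner (measurable_subtype_coe.comp (hTFmeas Fstar)) measurable_subtype_coe
    · intro x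
      calc |⟪(Tstar x : EuclideanSpace ℝ (Fin d)), (x : EuclideanSpace ℝ (Fin d))⟫|
          ≤ ‖(Tstar x : EuclideanSpace ℝ (Fin d))‖ * ‖(x : EuclideanSpace ℝ (Fin d))‖ :=
            abs_real_inner_le_norm _ _
        _ ≤ R * R := mul_le_mul (hR (Tstar x)) (hR x) (norm_nonneg _) hRpos
  -- expansion of the transport cost
  have hcostexp : transportCost Tstar μ
      = (∫ x : Ω, ‖(Tstar x : EuclideanSpace ℝ (Fin d))‖ ^ 2 ∂μ)
        - 2 * (∫ x : Ω, ⟪(Tstar x : EuclideanSpace ℝ (Fin d)), (x : EuclideanSpace ℝ (Fin d))⟫ ∂μ)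
        + ∫ x : Ω, ‖(x : EuclideanSpace ℝ (Fin d))‖ ^ 2 ∂μ := by
    rw [transportCost]
    have hptw : ∀ x : Ω, ‖(Tstar x : EuclideanSpace ℝ (Fin d)) - (x : EuclideanSpace ℝ (Fin d))‖ ^ 2
        = ‖(Tstar x : EuclideanSpace ℝ (Fin d))‖ ^ 2
          - 2 * ⟪(Tstar x : EuclideanSpace ℝ (Fin d)), (x : EuclideanSpace ℝ (Fin d))⟫
          + ‖(x : EuclideanSpace ℝ (Fin d))‖ ^ 2 := fun x => norm_sub_sq_real _ _
    simp_rw [hptw]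
    have hAB : Integrable (fun x : Ω => ‖(Tstar x : EuclideanSpace ℝ (Fin d))‖ ^ 2
        - 2 * ⟪(Tstar x : EuclideanSpace ℝ (Fin d)), (x : EuclideanSpace ℝ (Fin d))⟫) μ :=
      hμI2.sub (hμI5.const_mul 2)
    rw [integral_add hAB hμI1, integral_sub hμI2 (hμI5.const_mul 2), integral_const_mul]
  have hI5val : (∫ x : Ω, ⟪(Tstar x : EuclideanSpace ℝ (Fin d)),
        (x : EuclideanSpace ℝ (Fin d))⟫ ∂μ)
      = (∫ x : Ω, hst Fstar ↑x ∂μ) + ∫ x : Ω, φ Fstar (Tstar x) ∂μ := by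
    rw [← integral_add hμI3 hμI4]
    exact integral_congr_ae hI5eq
  have hlower : ∀ c ∈ { c : ℝ | ∃ γ : Measure (Ω × Ω), IsProbabilityMeasure γ ∧
      γ.map Prod.fst = μ ∧ γ.map Prod.snd = ν ∧
      c = ∫ p, ‖(p.1 : EuclideanSpace ℝ (Fin d)) - (p.2 : EuclideanSpace ℝ (Fin d))‖ ^ 2 ∂γ },
      transportCost Tstar μ ≤ c := by
    rintro c ⟨γ, hγp, hγ1, hγ2, hceq⟩
    haveI := hγp
    -- continuous components on Ω × Ω
    have hc1 : Continuous (fun p : Ω × Ω => ‖(p.1 : EuclideanSpace ℝ (Fin d))‖ ^ 2) :=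
      ((continuous_norm.comp (continuous_subtype_val.comp continuous_fst)).pow 2)
    have hc2 : Continuous (fun p : Ω × Ω => ‖(p.2 : EuclideanSpace ℝ (Fin d))‖ ^ 2) :=
      ((continuous_norm.comp (continuous_subtype_val.comp continuous_snd)).pow 2)
    have hc3 : Continuous (fun p : Ω × Ω => hst Fstar ↑p.1) :=
      (hstc Fstar).comp (continuous_subtype_val.comp continuous_fst)
    have hc4 : Continuous (fun p : Ω × Ω => φ Fstar p.2) :=
      (hφcont Fstar).comp continuous_snd
    have hcin : Continuous (fun p : Ω × Ω => ⟪(p.1 : EuclideanSpace ℝ (Fin d)),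
        (p.2 : EuclideanSpace ℝ (Fin d))⟫) :=
      (continuous_subtype_val.comp continuous_fst).inner (continuous_subtype_val.comp continuous_snd)
    have hg1 : Integrable (fun p : Ω × Ω => ‖(p.1 : EuclideanSpace ℝ (Fin d))‖ ^ 2) γ :=
      integrable_cont' hc1
    have hg2 : Integrable (fun p : Ω × Ω => ‖(p.2 : EuclideanSpace ℝ (Fin d))‖ ^ 2) γ :=
      integrable_cont' hc2
    have hg3 : Integrable (fun p : Ω × Ω => hst Fstar ↑p.1) γ := integrable_cont' hc3
    have hg4 : Integrable (fun p : Ω × Ω => φ Fstar p.2) γ := integrable_cont' hc4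
    -- pointwise lower bound on the quadratic cost
    have hptw : ∀ p : Ω × Ω,
        ‖(p.1 : EuclideanSpace ℝ (Fin d))‖ ^ 2 + ‖(p.2 : EuclideanSpace ℝ (Fin d))‖ ^ 2
          - 2 * hst Fstar ↑p.1 - 2 * φ Fstar p.2
        ≤ ‖(p.1 : EuclideanSpace ℝ (Fin d)) - (p.2 : EuclideanSpace ℝ (Fin d))‖ ^ 2 := by
      intro p
      have hfen : ⟪(p.1 : EuclideanSpace ℝ (Fin d)), (p.2 : EuclideanSpace ℝ (Fin d))⟫
          ≤ hst Fstar ↑p.1 + φ Fstar p.2 := by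
        have := hle Fstar ↑p.1 p.2
        simp only [hgdef] at this
        linarith
      have hexp : ‖(p.1 : EuclideanSpace ℝ (Fin d)) - (p.2 : EuclideanSpace ℝ (Fin d))‖ ^ 2
          = ‖(p.1 : EuclideanSpace ℝ (Fin d))‖ ^ 2
            - 2 * ⟪(p.1 : EuclideanSpace ℝ (Fin d)), (p.2 : EuclideanSpace ℝ (Fin d))⟫
            + ‖(p.2 : EuclideanSpace ℝ (Fin d))‖ ^ 2 := norm_sub_sq_real _ _
      rw [hexp]
      linarith
    have hint : (∫ p, (‖(p.1 : EuclideanSpace ℝ (Fin d))‖ ^ 2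
        + ‖(p.2 : EuclideanSpace ℝ (Fin d))‖ ^ 2
        - 2 * hst Fstar ↑p.1 - 2 * φ Fstar p.2) ∂γ)
        ≤ ∫ p, ‖(p.1 : EuclideanSpace ℝ (Fin d)) - (p.2 : EuclideanSpace ℝ (Fin d))‖ ^ 2 ∂γ :=
      integral_mono (((hg1.add hg2).sub (hg3.const_mul 2)).sub (hg4.const_mul 2))
        (integrable_cont' hacont) hptw
    have hbexp : (∫ p, (‖(p.1 : EuclideanSpace ℝ (Fin d))‖ ^ 2
        + ‖(p.2 : EuclideanSpace ℝ (Fin d))‖ ^ 2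
        - 2 * hst Fstar ↑p.1 - 2 * φ Fstar p.2) ∂γ)
        = (∫ p, ‖(p.1 : EuclideanSpace ℝ (Fin d))‖ ^ 2 ∂γ)
          + (∫ p, ‖(p.2 : EuclideanSpace ℝ (Fin d))‖ ^ 2 ∂γ)
          - 2 * (∫ p, hst Fstar ↑p.1 ∂γ) - 2 * (∫ p, φ Fstar p.2 ∂γ) := by
      have h12 : Integrable (fun p : Ω × Ω => ‖(p.1 : EuclideanSpace ℝ (Fin d))‖ ^ 2
          + ‖(p.2 : EuclideanSpace ℝ (Fin d))‖ ^ 2) γ := hg1.add hg2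
      have h123 : Integrable (fun p : Ω × Ω => ‖(p.1 : EuclideanSpace ℝ (Fin d))‖ ^ 2
          + ‖(p.2 : EuclideanSpace ℝ (Fin d))‖ ^ 2 - 2 * hst Fstar ↑p.1) γ :=
        h12.sub (hg3.const_mul 2)
      rw [integral_sub h123 (hg4.const_mul 2), integral_sub h12 (hg3.const_mul 2),
        integral_add hg1 hg2, integral_const_mul, integral_const_mul]
    -- marginal computations
    have hmarg1 : ∀ (h : Ω → ℝ), Continuous h → (∫ p : Ω × Ω, h p.1 ∂γ) = ∫ x : Ω, h x ∂μ := by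
      intro h hcont
      rw [← hγ1, integral_map measurable_fst.aemeasurable hcont.aestronglyMeasurable]
    have hmarg2 : ∀ (h : Ω → ℝ), Continuous h →
        (∫ p : Ω × Ω, h p.2 ∂γ) = ∫ x : Ω, h (Tstar x) ∂μ := by
      intro h hcont
      rw [← integral_map measurable_snd.aemeasurable hcont.aestronglyMeasurable, hγ2, hνdef,
        integral_map (hTFmeas Fstar).aemeasurable hcont.aestronglyMeasurable]
    rw [hceq]
    rw [hbexp] at hint
    rw [hmarg1 (fun x : Ω => ‖(x : EuclideanSpace ℝ (Fin d))‖ ^ 2)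
        ((continuous_norm.comp continuous_subtype_val).pow 2),
      hmarg2 (fun x : Ω => ‖(x : EuclideanSpace ℝ (Fin d))‖ ^ 2)
        ((continuous_norm.comp continuous_subtype_val).pow 2),
      hmarg1 (fun x : Ω => hst Fstar ↑x) ((hstc Fstar).comp continuous_subtype_val),
      hmarg2 (fun y : Ω => φ Fstar y) (hφcont Fstar)] at hint
    rw [hcostexp, hI5val]
    linarith
  have hge : transportCost Tstar μ ≤ W2sq μ ν := by
    rw [W2sq]
    exact le_csInf ⟨transportCost Tstar μ, γ0, hγ0prob, hγ0fst, hγ0snd, hcosteq⟩ hlower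
  exact le_antisymm hge hW2le
end

section
/- (Proposition 2, second part.) Let μ be an absolutely continuous Borel probability measure on Ω with μ(∂Ω) = 0 and let τ > 0. Then every minimizer (T, F) of (T, F) ↦ 𝓛(F, T_♯μ) + (1/(2τ)) ∫_Ω ‖T(x) − x‖² dμ(x) over Borel measurable maps T : Ω → Ω and F ∈ 𝓕 has the property that T is an optimal transport map from μ to T_♯μ, i.e. ∫_Ω ‖T(x) − x‖² dμ(x) = W2²(μ, T_♯μ). -/
open MeasureTheory

open ProbabilityTheory Set Filter Topology Function


noncomputable def quantileFun (ν : Measure ℝ) : ℝ → ℝ :=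
  fun t => if 0 < t ∧ t < 1 then sInf {x | t ≤ cdf ν x} else 0

variable (ν : Measure ℝ) [IsProbabilityMeasure ν]

lemma quantile_nonempty {t : ℝ} (ht : t < 1) : {x | t ≤ cdf ν x}.Nonempty := by
  have h := (tendsto_cdf_atTop ν).eventually (eventually_ge_nhds ht)
  exact h.exists

lemma quantile_bddBelow {t : ℝ} (ht : 0 < t) : BddBelow {x | t ≤ cdf ν x} := by
  obtain ⟨a, ha⟩ := eventually_atBot.mp ((tendsto_cdf_atBot ν).eventually (eventually_lt_nhds ht))
  refine ⟨a, fun x hx => ?_⟩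
  by_contra hlt
  push_neg at hlt
  exact absurd (le_trans hx (monotone_cdf ν hlt.le)) (not_le_of_gt (ha a le_rfl))

lemma quantile_le_iff {t x : ℝ} (ht0 : 0 < t) (ht1 : t < 1) :
    sInf {y | t ≤ cdf ν y} ≤ x ↔ t ≤ cdf ν x := by
  constructor
  · intro h
    have key : ∀ y, x < y → t ≤ cdf ν y := by
      intro y hy
      obtain ⟨s, hs, hs'⟩ := exists_lt_of_csInf_lt (quantile_nonempty ν ht1) (lt_of_le_of_lt h hy)
      exact le_trans hs (monotone_cdf ν hs'.le)
    refine ge_of_tendsto (((cdf ν).right_continuous x).tendsto.mono_left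
      (nhdsWithin_mono x Ioi_subset_Ici_self)) ?_
    filter_upwards [self_mem_nhdsWithin] with y hy using key y hy
  · intro h
    exact csInf_le (quantile_bddBelow ν ht0) h

lemma measurable_quantileFun : Measurable (quantileFun ν) := by
  apply measurable_of_Iic
  intro x
  by_cases hx : (0:ℝ) ≤ x
  · have : quantileFun ν ⁻¹' Iic x = (Ioo 0 1 ∩ Iic (cdf ν x)) ∪ (Ioo (0:ℝ) 1)ᶜ := by
      ext t
      simp only [quantileFun, mem_preimage, mem_Iic, mem_union, mem_inter_iff, mem_Ioo,
        mem_compl_iff, not_and_or, not_lt]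
      by_cases ht : 0 < t ∧ t < 1
      · rw [if_pos ht, quantile_le_iff ν ht.1 ht.2]
        simp [ht.1, ht.2, not_le.mpr ht.1, not_le.mpr ht.2]
      · rw [if_neg ht]
        simp only [hx, true_iff]
        rcases not_and_or.mp ht with h | h
        · exact Or.inr (Or.inl (not_lt.mp h))
        · exact Or.inr (Or.inr (not_lt.mp h))
    rw [this]
    exact (measurableSet_Ioo.inter measurableSet_Iic).union measurableSet_Ioo.compl
  · have : quantileFun ν ⁻¹' Iic x = Ioo 0 1 ∩ Iic (cdf ν x) := by
      ext t
      simp only [quantileFun, mem_preimage, mem_Iic, mem_inter_iff, mem_Ioo]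
      by_cases ht : 0 < t ∧ t < 1
      · rw [if_pos ht, quantile_le_iff ν ht.1 ht.2]
        simp [ht.1, ht.2]
      · rw [if_neg ht]
        constructor
        · intro h; exact absurd h hx
        · rintro ⟨h1, _⟩; exact absurd h1 ht
    rw [this]
    exact measurableSet_Ioo.inter measurableSet_Iic

lemma map_quantileFun : (volume.restrict (Ioo 0 1)).map (quantileFun ν) = ν := by
  have hmeas := measurable_quantileFun ν
  haveI : IsProbabilityMeasure (volume.restrict (Ioo (0:ℝ) 1)) :=
    ⟨by simp [Real.volume_Ioo]⟩
  haveI : IsProbabilityMeasure ((volume.restrict (Ioo (0:ℝ) 1)).map (quantileFun ν)) :=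
    Measure.isProbabilityMeasure_map hmeas.aemeasurable
  refine Measure.ext_of_Iic _ _ (fun x => ?_)
  rw [Measure.map_apply hmeas measurableSet_Iic, Measure.restrict_apply (hmeas measurableSet_Iic)]
  have hset : quantileFun ν ⁻¹' Iic x ∩ Ioo 0 1 = Iic (cdf ν x) ∩ Ioo 0 1 := by
    ext t
    simp only [quantileFun, mem_inter_iff, mem_preimage, mem_Iic, mem_Ioo]
    constructor
    · rintro ⟨h1, h2⟩
      rw [if_pos ⟨h2.1, h2.2⟩, quantile_le_iff ν h2.1 h2.2] at h1
      exact ⟨h1, h2⟩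
    · rintro ⟨h1, h2⟩
      rw [if_pos ⟨h2.1, h2.2⟩, quantile_le_iff ν h2.1 h2.2]
      exact ⟨h1, h2⟩
  rw [hset, ← ofReal_cdf ν x]
  rcases lt_or_eq_of_le (cdf_le_one ν x) with h1 | h1
  · have : Iic (cdf ν x) ∩ Ioo 0 1 = Ioc 0 (cdf ν x) := by
      ext t
      simp only [mem_inter_iff, mem_Iic, mem_Ioo, mem_Ioc]
      constructor
      · rintro ⟨h, h0, _⟩; exact ⟨h0, h⟩
      · rintro ⟨h0, h⟩; exact ⟨h, h0, lt_of_le_of_lt h h1⟩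
    rw [this, Real.volume_Ioc, sub_zero]
  · have : Iic (cdf ν x) ∩ Ioo 0 1 = Ioo 0 1 := by
      rw [inter_eq_right]
      intro t ht
      exact le_trans ht.2.le h1.ge
    rw [this, Real.volume_Ioo, sub_zero, ← h1]

section Atomless
variable (P : Measure ℝ) [IsProbabilityMeasure P] [NullSingletonClass P]

lemma cdf_leftLim_eq (a : ℝ) : leftLim (cdf P) a = cdf P a := by
  have h1 := (cdf P).measure_singleton a
  rw [measure_cdf, measure_singleton] at h1
  have h2 : cdf P a - leftLim (cdf P) a ≤ 0 := by
    by_contra h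
    push_neg at h
    exact absurd h1.symm (ne_of_gt (ENNReal.ofReal_pos.mpr h))
  have h3 : leftLim (cdf P) a ≤ cdf P a := (monotone_cdf P).leftLim_le le_rfl
  linarith

lemma map_cdf_atomless : P.map (cdf P) = volume.restrict (Ioo 0 1) := by
  have hmeas : Measurable (cdf P : ℝ → ℝ) := (monotone_cdf P).measurable
  haveI : IsProbabilityMeasure (volume.restrict (Ioo (0:ℝ) 1)) := ⟨by simp [Real.volume_Ioo]⟩
  haveI : IsProbabilityMeasure (P.map (cdf P)) := Measure.isProbabilityMeasure_map hmeas.aemeasurable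
  refine Measure.ext_of_Iic _ _ (fun t => ?_)
  rw [Measure.map_apply hmeas measurableSet_Iic, Measure.restrict_apply measurableSet_Iic]
  rcases lt_or_ge t 0 with ht | ht
  · have hA : (cdf P : ℝ → ℝ) ⁻¹' Iic t = ∅ := by
      ext x; simp only [mem_preimage, mem_Iic, mem_empty_iff_false, iff_false, not_le]
      exact lt_of_lt_of_le ht (cdf_nonneg P x)
    have hB : Iic t ∩ Ioo 0 1 = ∅ := by
      ext s; simp only [mem_inter_iff, mem_Iic, mem_Ioo, mem_empty_iff_false, iff_false]
      rintro ⟨h1, h2, _⟩; linarith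
    rw [hA, hB]
    simp
  rcases le_or_gt 1 t with ht1 | ht1
  · have hA : (cdf P : ℝ → ℝ) ⁻¹' Iic t = univ := by
      ext x; simp only [mem_preimage, mem_Iic, mem_univ, iff_true]
      exact le_trans (cdf_le_one P x) ht1
    have hB : Iic t ∩ Ioo 0 1 = Ioo 0 1 := by
      rw [inter_eq_right]; intro s hs; exact le_trans hs.2.le ht1
    rw [hA, hB, Real.volume_Ioo, sub_zero, measure_univ, ENNReal.ofReal_one]
  · have hB : Iic t ∩ Ioo 0 1 = Ioc 0 t := by
      ext s
      simp only [mem_inter_iff, mem_Iic, mem_Ioo, mem_Ioc]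
      constructor
      · rintro ⟨h1, h2, _⟩; exact ⟨h2, h1⟩
      · rintro ⟨h1, h2⟩; exact ⟨h2, h1, lt_of_le_of_lt h2 ht1⟩
    rw [hB, Real.volume_Ioc, sub_zero]
    set A := (cdf P : ℝ → ℝ) ⁻¹' Iic t with hAdef
    by_cases hA : A.Nonempty
    · obtain ⟨b, hb⟩ := eventually_atTop.mp
        ((tendsto_cdf_atTop P).eventually (eventually_gt_nhds ht1))
      have hbdd : BddAbove A := by
        refine ⟨b, fun x hx => ?_⟩
        by_contra hlt
        push_neg at hlt
        exact absurd (hx : cdf P x ≤ t) (not_le_of_gt (hb x hlt.le))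
      set a := sSup A with hadef
      have hFa_le : cdf P a ≤ t := by
        rw [← cdf_leftLim_eq P a]
        refine le_of_tendsto ((monotone_cdf P).tendsto_leftLim a) ?_
        filter_upwards [self_mem_nhdsWithin] with y hy
        obtain ⟨s, hs, hs'⟩ := exists_lt_of_lt_csSup hA hy
        exact le_trans (monotone_cdf P hs'.le) hs
      have hle_Fa : t ≤ cdf P a := by
        refine ge_of_tendsto (((cdf P).right_continuous a).tendsto.mono_left
          (nhdsWithin_mono a Ioi_subset_Ici_self)) ?_
        filter_upwards [self_mem_nhdsWithin] with y hy
        by_contra hlt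
        push_neg at hlt
        exact absurd (le_csSup hbdd (hlt.le : cdf P y ≤ t)) (not_le_of_gt hy)
      have hAIic : A = Iic a := by
        ext x
        simp only [hAdef, mem_preimage, mem_Iic]
        constructor
        · intro hx; exact le_csSup hbdd hx
        · intro hx; exact le_trans (monotone_cdf P hx) hFa_le
      rw [hAIic, ← ofReal_cdf P a, le_antisymm hFa_le hle_Fa]
    · rw [not_nonempty_iff_eq_empty] at hA
      rw [hA]
      have ht0 : t ≤ 0 := by
        by_contra h
        push_neg at h
        obtain ⟨x, hx⟩ := ((tendsto_cdf_atBot P).eventually (eventually_lt_nhds h)).exists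
        exact absurd (hAdef ▸ (Set.eq_empty_iff_forall_notMem.mp hA x)) (by
          simp only [mem_preimage, mem_Iic, not_le]
          intro hcon
          exact absurd hx.le (not_le_of_gt hcon))
      simp [le_antisymm ht0 ht]

lemma exists_map_real (Q : Measure ℝ) [IsProbabilityMeasure Q] :
    ∃ g : ℝ → ℝ, Measurable g ∧ P.map g = Q := by
  refine ⟨quantileFun Q ∘ cdf P, (measurable_quantileFun Q).comp (monotone_cdf P).measurable, ?_⟩
  rw [← Measure.map_map (measurable_quantileFun Q) (monotone_cdf P).measurable,
    map_cdf_atomless, map_quantileFun]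

end Atomless

lemma exists_map_pushforward {X : Type*} [MeasurableSpace X] [StandardBorelSpace X] [Nonempty X]
    (P Q : Measure X) [IsProbabilityMeasure P] [IsProbabilityMeasure Q] [NullSingletonClass P] :
    ∃ f : X → X, Measurable f ∧ P.map f = Q := by
  obtain ⟨e, he⟩ := exists_measurableEmbedding_real X
  have hP' : IsProbabilityMeasure (P.map e) := Measure.isProbabilityMeasure_map he.measurable.aemeasurable
  have hQ' : IsProbabilityMeasure (Q.map e) := Measure.isProbabilityMeasure_map he.measurable.aemeasurable
  have hPatomless : NullSingletonClass (P.map e) := by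
    refine ⟨fun y => ?_⟩
    rw [Measure.map_apply he.measurable (measurableSet_singleton y)]
    refine Set.Subsingleton.measure_zero (fun a ha b hb => ?_) P
    exact he.injective (by simp only [Set.mem_preimage, Set.mem_singleton_iff] at ha hb; rw [ha, hb])
  obtain ⟨g, hg, hmap⟩ := @exists_map_real (P.map e) hP' hPatomless (Q.map e) hQ'
  classical
  let r : ℝ → X := fun y => if hy : y ∈ Set.range e then Set.rangeSplitting e ⟨y, hy⟩
    else Classical.arbitrary X
  have hr : Measurable r := by
    refine Measurable.dite ?_ measurable_const he.measurableSet_range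
    exact he.measurable_rangeSplitting
  have hre : ∀ x, r (e x) = x := by
    intro x
    have h1 : r (e x) = Set.rangeSplitting e ⟨e x, Set.mem_range_self x⟩ := by
      simp only [r]
      rw [dif_pos (Set.mem_range_self x)]
    apply he.injective
    rw [h1, Set.apply_rangeSplitting e ⟨e x, Set.mem_range_self x⟩]
  refine ⟨fun x => r (g (e x)), (hr.comp hg).comp he.measurable, ?_⟩
  have h1 : P.map (fun x => r (g (e x))) = ((P.map e).map g).map r := by
    rw [Measure.map_map hg he.measurable, Measure.map_map hr (hg.comp he.measurable)]
    rfl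
  rw [h1, hmap, Measure.map_map hr he.measurable,
    show r ∘ e = id from funext hre, Measure.map_id]

lemma measure_eq_sum_restrict {Z : Type*} [MeasurableSpace Z] (κ : Measure Z) {n : ℕ}
    (C : Fin n → Set Z) (hmeas : ∀ i, MeasurableSet (C i))
    (hdisj : Pairwise (Function.onFun Disjoint C)) (hcover : (⋃ i, C i) = univ) :
    κ = ∑ i : Fin n, κ.restrict (C i) := by
  refine Measure.ext (fun s hs => ?_)
  rw [Measure.finset_sum_apply]
  simp_rw [Measure.restrict_apply hs]
  have h1 : ∑ i ∈ Finset.univ, κ (s ∩ C i) = κ (⋃ i ∈ Finset.univ, s ∩ C i) := by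
    rw [measure_biUnion_finset ?_ (fun i _ => hs.inter (hmeas i))]
    intro i _ j _ hij
    exact (hdisj hij).mono inter_subset_right inter_subset_right
  rw [h1]
  congr 1
  simp only [Finset.mem_univ, iUnion_true]
  rw [← inter_iUnion, hcover, inter_univ]

lemma map_finset_sum' {Z W : Type*} [MeasurableSpace Z] [MeasurableSpace W] {n : ℕ}
    (κ : Fin n → Measure Z) {f : Z → W} (hf : Measurable f) :
    (∑ i : Fin n, κ i).map f = ∑ i : Fin n, (κ i).map f := by
  refine Measure.ext (fun s hs => ?_)
  rw [Measure.map_apply hf hs, Measure.finset_sum_apply, Measure.finset_sum_apply]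
  simp_rw [Measure.map_apply hf hs]

lemma exists_partition {X : Type*} [MetricSpace X] [CompactSpace X] [MeasurableSpace X]
    [BorelSpace X] {δ : ℝ} (hδ : 0 < δ) :
    ∃ (n : ℕ) (c : Fin n → X) (B : Fin n → Set X) (idx : X → Fin n),
      (∀ i, MeasurableSet (B i)) ∧ Pairwise (Function.onFun Disjoint B) ∧
      (∀ i, B i ⊆ Metric.ball (c i) δ) ∧
      Measurable idx ∧ (∀ x, x ∈ B (idx x)) ∧ (∀ i x, x ∈ B i → idx x = i) := by
  classical
  obtain ⟨t, ht⟩ := isCompact_univ.elim_finite_subcover (fun x : X => Metric.ball x δ)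
    (fun _ => Metric.isOpen_ball) (fun x _ => mem_iUnion.mpr ⟨x, Metric.mem_ball_self hδ⟩)
  set n := t.card with hn
  set c : Fin n → X := fun i => (t.equivFin.symm i : X) with hc
  have hcov : ∀ x : X, ∃ i, x ∈ Metric.ball (c i) δ := by
    intro x
    obtain ⟨y, hy, hxy⟩ := by
      have := ht (mem_univ x)
      simpa only [mem_iUnion, exists_prop] using this
    exact ⟨t.equivFin ⟨y, hy⟩, by simpa [hc, Equiv.symm_apply_apply] using hxy⟩
  set S : X → Finset (Fin n) := fun x => Finset.univ.filter (fun i => x ∈ Metric.ball (c i) δ)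
    with hS
  have hSne : ∀ x, (S x).Nonempty := by
    intro x
    obtain ⟨i, hi⟩ := hcov x
    exact ⟨i, by simp only [hS, Finset.mem_filter, Finset.mem_univ, true_and]; exact hi⟩
  set idx : X → Fin n := fun x => (S x).min' (hSne x) with hidx
  set B : Fin n → Set X := fun i =>
    Metric.ball (c i) δ \ ⋃ j : Fin n, ⋃ _ : j < i, Metric.ball (c j) δ with hB
  have hmem_iff : ∀ i x, x ∈ B i ↔ idx x = i := by
    intro i x
    constructor
    · rintro ⟨hball, hnot⟩
      have h1 : idx x ≤ i := (S x).min'_le i (by simp only [hS, Finset.mem_filter, Finset.mem_univ, true_and]; exact hball)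
      rcases lt_or_eq_of_le h1 with h2 | h2
      · exfalso
        have h3 : x ∈ Metric.ball (c (idx x)) δ := by
          have := (S x).min'_mem (hSne x)
          simp only [hS, Finset.mem_filter, Finset.mem_univ, true_and] at this
          exact this
        exact hnot (mem_iUnion.mpr ⟨idx x, mem_iUnion.mpr ⟨h2, h3⟩⟩)
      · exact h2
    · rintro rfl
      constructor
      · have := (S x).min'_mem (hSne x)
        simp only [hS, Finset.mem_filter, Finset.mem_univ, true_and] at this
        exact this
      · intro hmem
        obtain ⟨j, hj⟩ := mem_iUnion.mp hmem
        obtain ⟨hjlt, hjball⟩ := mem_iUnion.mp hj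
        exact absurd ((S x).min'_le j (by simp only [hS, Finset.mem_filter, Finset.mem_univ, true_and]; exact hjball)) (not_le_of_gt hjlt)
  refine ⟨n, c, B, idx, ?_, ?_, ?_, ?_, ?_, ?_⟩
  · intro i
    exact Metric.isOpen_ball.measurableSet.diff
      (MeasurableSet.iUnion fun j => MeasurableSet.iUnion fun _ =>
        Metric.isOpen_ball.measurableSet)
  · intro i j hij
    rw [Function.onFun]
    rw [disjoint_left]
    intro x hxi hxj
    rw [hmem_iff] at hxi hxj
    exact hij (hxi.symm.trans hxj)
  · intro i x hx
    exact hx.1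
  · apply measurable_to_countable'
    intro i
    have : idx ⁻¹' {i} = B i := by
      ext x
      simp only [mem_preimage, mem_singleton_iff, hmem_iff]
    rw [this]
    exact Metric.isOpen_ball.measurableSet.diff
      (MeasurableSet.iUnion fun j => MeasurableSet.iUnion fun _ =>
        Metric.isOpen_ball.measurableSet)
  · intro x
    rw [hmem_iff]
  · intro i x hx
    exact (hmem_iff i x).mp hx

lemma exists_good_map {d : ℕ} {Ω : Set (EuclideanSpace ℝ (Fin d))} (hcomp : IsCompact Ω)
    (μ : Measure Ω) [IsProbabilityMeasure μ] [NullSingletonClass μ]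
    (γ : Measure (Ω × Ω)) [IsProbabilityMeasure γ]
    (h1 : γ.map Prod.fst = μ) (ν : Measure Ω) (h2 : γ.map Prod.snd = ν)
    {ε : ℝ} (hε : 0 < ε) :
    ∃ T' : Ω → Ω, Measurable T' ∧ μ.map T' = ν ∧
      transportCost T' μ ≤
        (∫ p, ‖(p.1 : EuclideanSpace ℝ (Fin d)) - (p.2 : EuclideanSpace ℝ (Fin d))‖ ^ 2 ∂γ)
          + ε := by
  classical
  haveI hne : Nonempty Ω := by
    by_contra h
    rw [not_nonempty_iff] at h
    have h0 : (univ : Set Ω) = ∅ := Set.univ_eq_empty_iff.mpr h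
    have h1' := measure_univ (μ := μ)
    rw [h0, measure_empty] at h1'
    exact zero_ne_one h1'
  haveI : CompactSpace Ω := isCompact_iff_compactSpace.mp hcomp
  haveI : PolishSpace Ω := hcomp.isClosed.polishSpace
  -- bound on diameters
  obtain ⟨R, hR⟩ := hcomp.isBounded.subset_closedBall 0
  set D : ℝ := 2 * R with hD
  have hnorm_le : ∀ x : Ω, ‖(x : EuclideanSpace ℝ (Fin d))‖ ≤ R := by
    intro x
    have := hR x.2
    rwa [Metric.mem_closedBall, dist_zero_right] at this
  have hDbound : ∀ x y : Ω, ‖(x : EuclideanSpace ℝ (Fin d)) - y‖ ≤ D := by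
    intro x y
    calc ‖(x : EuclideanSpace ℝ (Fin d)) - y‖ ≤ ‖(x : EuclideanSpace ℝ (Fin d))‖ + ‖(y : EuclideanSpace ℝ (Fin d))‖ := norm_sub_le _ _
      _ ≤ R + R := add_le_add (hnorm_le x) (hnorm_le y)
      _ = D := by ring
  have hD0 : 0 ≤ D := le_trans (norm_nonneg _) (hDbound (Classical.arbitrary Ω) (Classical.arbitrary Ω))
  -- choice of δ
  set δ : ℝ := min 1 (ε / (4 * D + 4)) with hδdef
  have hδpos : 0 < δ := lt_min one_pos (div_pos hε (by linarith))
  have hδ1 : δ ≤ 1 := min_le_left _ _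
  have hgapε : 4 * D * δ + 4 * δ ^ 2 ≤ ε := by
    have h3 : δ ≤ ε / (4 * D + 4) := min_le_right _ _
    have h4 : δ * (4 * D + 4) ≤ ε := by
      rw [← le_div_iff₀ (by linarith : (0:ℝ) < 4 * D + 4)]
      exact h3
    nlinarith [sq_nonneg δ, hδpos.le]
  -- partition
  obtain ⟨n, c, B, idx, hBmeas, hBdisj, hBball, hidxmeas, hidxmem, hidxeq⟩ :=
    exists_partition (X := Ω) hδpos
  have hcoverB : (⋃ i, B i) = univ := by
    refine eq_univ_of_forall (fun x => mem_iUnion.mpr ⟨idx x, hidxmem x⟩)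
  -- pieces of γ and their second marginals
  set C : Fin n → Set (Ω × Ω) := fun i => B i ×ˢ univ with hC
  have hCmeas : ∀ i, MeasurableSet (C i) := fun i => (hBmeas i).prod MeasurableSet.univ
  have hCdisj : Pairwise (Function.onFun Disjoint C) := by
    intro i j hij
    rw [Function.onFun, disjoint_left]
    rintro p ⟨hpi, -⟩ ⟨hpj, -⟩
    exact ((hBdisj hij).le_bot ⟨hpi, hpj⟩ : False)
  have hCcover : (⋃ i, C i) = univ := by
    ext p
    simp only [hC, mem_iUnion, mem_prod, mem_univ, and_true, iff_true]
    exact mem_iUnion.mp (hcoverB ▸ mem_univ p.1)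
  set νi : Fin n → Measure Ω := fun i => (γ.restrict (C i)).map Prod.snd with hνi
  have hfstpre : ∀ i, Prod.fst ⁻¹' (B i) = C i := by
    intro i
    ext p
    simp [hC, Set.mem_prod]
  have hνi_univ : ∀ i, νi i univ = μ (B i) := by
    intro i
    rw [hνi]
    simp only
    rw [Measure.map_apply measurable_snd MeasurableSet.univ, preimage_univ,
      Measure.restrict_apply MeasurableSet.univ, univ_inter, ← h1,
      Measure.map_apply measurable_fst (hBmeas i), hfstpre i]
  haveI hνifin : ∀ i, IsFiniteMeasure (νi i) := by
    intro i
    refine ⟨?_⟩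
    rw [hνi_univ i]
    exact measure_lt_top μ _
  -- decompositions
  have hμdec : μ = ∑ i : Fin n, μ.restrict (B i) :=
    measure_eq_sum_restrict μ B hBmeas hBdisj hcoverB
  have hγdec : γ = ∑ i : Fin n, γ.restrict (C i) :=
    measure_eq_sum_restrict γ C hCmeas hCdisj hCcover
  -- the maps on each piece
  have hf : ∀ i, ∃ f : Ω → Ω, Measurable f ∧ (μ.restrict (B i)).map f = νi i := by
    intro i
    by_cases hm : μ (B i) = 0
    · refine ⟨id, measurable_id, ?_⟩
      rw [Measure.map_id, Measure.restrict_eq_zero.mpr hm]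
      have hν0 : νi i univ = 0 := by rw [hνi_univ i, hm]
      exact (Measure.measure_univ_eq_zero.mp hν0).symm
    · have hmtop : μ (B i) ≠ ⊤ := measure_ne_top μ _
      haveI hP : IsProbabilityMeasure ((μ (B i))⁻¹ • μ.restrict (B i)) := by
        refine ⟨?_⟩
        rw [Measure.smul_apply, Measure.restrict_apply MeasurableSet.univ, univ_inter,
          smul_eq_mul, ENNReal.inv_mul_cancel hm hmtop]
      haveI hPa : NullSingletonClass ((μ (B i))⁻¹ • μ.restrict (B i)) := by
        refine ⟨fun x => ?_⟩
        rw [Measure.smul_apply, measure_singleton, smul_eq_mul, mul_zero]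
      haveI hQ : IsProbabilityMeasure ((μ (B i))⁻¹ • νi i) := by
        refine ⟨?_⟩
        rw [Measure.smul_apply, hνi_univ i, smul_eq_mul, ENNReal.inv_mul_cancel hm hmtop]
      obtain ⟨f, hfm, hfmap⟩ :=
        exists_map_pushforward ((μ (B i))⁻¹ • μ.restrict (B i)) ((μ (B i))⁻¹ • νi i)
      refine ⟨f, hfm, ?_⟩
      rw [Measure.map_smul] at hfmap
      calc (μ.restrict (B i)).map f
          = μ (B i) • (μ (B i))⁻¹ • (μ.restrict (B i)).map f := by
            rw [smul_smul, ENNReal.mul_inv_cancel hm hmtop, one_smul]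
        _ = μ (B i) • (μ (B i))⁻¹ • νi i := by rw [hfmap]
        _ = νi i := by rw [smul_smul, ENNReal.mul_inv_cancel hm hmtop, one_smul]
  choose f hfmeas hfmap using hf
  -- the glued map
  set T' : Ω → Ω := fun x => f (idx x) x with hT'def
  have hT'meas : Measurable T' := by
    have h1' : Measurable (fun p : Ω × Fin n => f p.2 p.1) :=
      measurable_from_prod_countable_left (fun i => hfmeas i)
    exact h1'.comp (measurable_id.prodMk hidxmeas)
  have hT'restr : ∀ i, (μ.restrict (B i)).map T' = νi i := by
    intro i
    rw [← hfmap i]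
    refine Measure.map_congr ?_
    filter_upwards [ae_restrict_mem (hBmeas i)] with x hx
    rw [hT'def]
    simp only [hidxeq i x hx]
  have hT'push : μ.map T' = ν := by
    conv_lhs => rw [hμdec]
    rw [map_finset_sum' _ hT'meas]
    have : ∀ i ∈ Finset.univ, (μ.restrict (B i)).map T' = (γ.restrict (C i)).map Prod.snd :=
      fun i _ => hT'restr i
    rw [Finset.sum_congr rfl this, ← map_finset_sum' _ measurable_snd, ← hγdec, h2]
  refine ⟨T', hT'meas, hT'push, ?_⟩
  -- cost estimate
  set K : ℝ := 4 * D * δ + 4 * δ ^ 2 with hK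
  have hK0 : 0 ≤ K := by positivity
  set g : Ω → ℝ := fun x => ‖(T' x : EuclideanSpace ℝ (Fin d)) - (x : EuclideanSpace ℝ (Fin d))‖ ^ 2 with hg
  set cost2 : Ω × Ω → ℝ := fun p => ‖(p.1 : EuclideanSpace ℝ (Fin d)) - (p.2 : EuclideanSpace ℝ (Fin d))‖ ^ 2 with hcost2
  have hgmeas : Measurable g :=
    ((measurable_subtype_coe.comp hT'meas).sub measurable_subtype_coe).norm.pow_const 2
  have hcost2meas : Measurable cost2 :=
    ((measurable_subtype_coe.comp measurable_fst).sub
      (measurable_subtype_coe.comp measurable_snd)).norm.pow_const 2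
  have habs : ∀ a : ℝ, 0 ≤ a → a ≤ D → ‖a ^ 2‖ ≤ D ^ 2 := by
    intro a ha haD
    rw [Real.norm_eq_abs, abs_of_nonneg (by positivity)]
    exact pow_le_pow_left₀ ha haD 2
  have hgbd : ∀ x, ‖g x‖ ≤ D ^ 2 := fun x => habs _ (norm_nonneg _) (hDbound _ _)
  have hcost2bd : ∀ p, ‖cost2 p‖ ≤ D ^ 2 := fun p => habs _ (norm_nonneg _) (hDbound _ _)
  have hgint : ∀ i, Integrable g (μ.restrict (B i)) := fun i =>
    ⟨hgmeas.aestronglyMeasurable, HasFiniteIntegral.of_bounded (C := D ^ 2) (ae_of_all _ hgbd)⟩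
  have hcost2int : ∀ i, Integrable cost2 (γ.restrict (C i)) := fun i =>
    ⟨hcost2meas.aestronglyMeasurable,
      HasFiniteIntegral.of_bounded (C := D ^ 2) (ae_of_all _ hcost2bd)⟩
  have hcost2intγ : Integrable cost2 γ :=
    ⟨hcost2meas.aestronglyMeasurable,
      HasFiniteIntegral.of_bounded (C := D ^ 2) (ae_of_all _ hcost2bd)⟩
  set φ : Fin n → Ω → ℝ :=
    fun i z => (‖(z : EuclideanSpace ℝ (Fin d)) - c i‖ + δ) ^ 2 with hφ
  set ψ : Fin n → Ω → ℝ :=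
    fun i z => (max (‖(z : EuclideanSpace ℝ (Fin d)) - c i‖ - δ) 0) ^ 2 with hψ
  have hφcont : ∀ i, Continuous (φ i) := fun i =>
    ((continuous_subtype_val.sub continuous_const).norm.add continuous_const).pow 2
  have hψcont : ∀ i, Continuous (ψ i) := fun i =>
    (((continuous_subtype_val.sub continuous_const).norm.sub continuous_const).max
      continuous_const).pow 2
  have hφbd : ∀ i z, ‖φ i z‖ ≤ (D + 1) ^ 2 := by
    intro i z
    rw [Real.norm_eq_abs, abs_of_nonneg (by positivity)]
    refine pow_le_pow_left₀ (by positivity) ?_ 2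
    have := hDbound z (c i)
    linarith
  have hψbd : ∀ i z, ‖ψ i z‖ ≤ (D + 1) ^ 2 := by
    intro i z
    rw [Real.norm_eq_abs, abs_of_nonneg (by positivity)]
    refine pow_le_pow_left₀ (le_max_right _ _) ?_ 2
    have := hDbound z (c i)
    refine max_le (by linarith [hδpos.le]) (by positivity)
  have hφint : ∀ i, Integrable (φ i) (νi i) := fun i =>
    ⟨(hφcont i).measurable.aestronglyMeasurable,
      HasFiniteIntegral.of_bounded (C := (D + 1) ^ 2) (ae_of_all _ (hφbd i))⟩
  have hψint : ∀ i, Integrable (ψ i) (νi i) := fun i =>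
    ⟨(hψcont i).measurable.aestronglyMeasurable,
      HasFiniteIntegral.of_bounded (C := (D + 1) ^ 2) (ae_of_all _ (hψbd i))⟩
  have key : ∀ i, ∫ x, g x ∂(μ.restrict (B i)) ≤
      (∫ p, cost2 p ∂(γ.restrict (C i))) + K * (μ (B i)).toReal := by
    intro i
    have s1 : ∫ x, g x ∂(μ.restrict (B i)) ≤ ∫ x, φ i (f i x) ∂(μ.restrict (B i)) := by
      refine integral_mono_ae (hgint i)
        ⟨((hφcont i).measurable.comp (hfmeas i)).aestronglyMeasurable,
          HasFiniteIntegral.of_bounded (C := (D + 1) ^ 2) (ae_of_all _ (fun x => hφbd i _))⟩ ?_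
      filter_upwards [ae_restrict_mem (hBmeas i)] with x hx
      have hxc : ‖(x : EuclideanSpace ℝ (Fin d)) - c i‖ ≤ δ := by
        have h := hBball i hx
        rw [Metric.mem_ball, Subtype.dist_eq, dist_eq_norm] at h
        exact h.le
      have hT : T' x = f i x := by rw [hT'def]; simp only [hidxeq i x hx]
      show g x ≤ φ i (f i x)
      rw [hg, hφ]
      simp only [hT]
      refine pow_le_pow_left₀ (norm_nonneg _) ?_ 2
      calc ‖(f i x : EuclideanSpace ℝ (Fin d)) - x‖
          = ‖((f i x : EuclideanSpace ℝ (Fin d)) - c i) + ((c i : EuclideanSpace ℝ (Fin d)) - x)‖ := by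
            rw [sub_add_sub_cancel]
        _ ≤ ‖(f i x : EuclideanSpace ℝ (Fin d)) - c i‖ + ‖(c i : EuclideanSpace ℝ (Fin d)) - x‖ :=
            norm_add_le _ _
        _ ≤ ‖(f i x : EuclideanSpace ℝ (Fin d)) - c i‖ + δ := by
            rw [norm_sub_rev (c i : EuclideanSpace ℝ (Fin d)) (x : EuclideanSpace ℝ (Fin d))]
            linarith
    have s2 : ∫ x, φ i (f i x) ∂(μ.restrict (B i)) = ∫ z, φ i z ∂(νi i) := by
      rw [← hfmap i, integral_map (hfmeas i).aemeasurable
        (hφcont i).measurable.aestronglyMeasurable]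
    have s3 : ∫ z, φ i z ∂(νi i) ≤ (∫ z, ψ i z ∂(νi i)) + K * (μ (B i)).toReal := by
      have hpt : ∀ z, φ i z ≤ ψ i z + K := by
        intro z
        rw [hφ, hψ, hK]
        simp only
        set a : ℝ := ‖(z : EuclideanSpace ℝ (Fin d)) - c i‖ with ha
        have ha0 : 0 ≤ a := norm_nonneg _
        have haD : a ≤ D := hDbound _ _
        rcases le_or_gt δ a with hcase | hcase
        · rw [max_eq_left (by linarith)]
          nlinarith
        · have hmax0 : 0 ≤ max (a - δ) 0 := le_max_right _ _
          nlinarith [sq_nonneg (max (a - δ) 0)]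
      calc ∫ z, φ i z ∂(νi i) ≤ ∫ z, (ψ i z + K) ∂(νi i) :=
            integral_mono (hφint i) ((hψint i).add (integrable_const K)) hpt
        _ = (∫ z, ψ i z ∂(νi i)) + ∫ _, K ∂(νi i) :=
            integral_add (hψint i) (integrable_const K)
        _ = (∫ z, ψ i z ∂(νi i)) + K * (μ (B i)).toReal := by
            rw [integral_const, measureReal_def, hνi_univ i, smul_eq_mul, mul_comm]
    have s4 : ∫ z, ψ i z ∂(νi i) = ∫ p, ψ i p.2 ∂(γ.restrict (C i)) := by
      rw [hνi]
      simp only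
      rw [integral_map measurable_snd.aemeasurable
        (hψcont i).measurable.aestronglyMeasurable]
    have s5 : ∫ p, ψ i p.2 ∂(γ.restrict (C i)) ≤ ∫ p, cost2 p ∂(γ.restrict (C i)) := by
      refine integral_mono_ae
        ⟨((hψcont i).measurable.comp measurable_snd).aestronglyMeasurable,
          HasFiniteIntegral.of_bounded (C := (D + 1) ^ 2) (ae_of_all _ (fun p => hψbd i _))⟩
        (hcost2int i) ?_
      filter_upwards [ae_restrict_mem (hCmeas i)] with p hp
      have hp1 : p.1 ∈ B i := hp.1
      have h1c : ‖(p.1 : EuclideanSpace ℝ (Fin d)) - c i‖ ≤ δ := by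
        have h := hBball i hp1
        rw [Metric.mem_ball, Subtype.dist_eq, dist_eq_norm] at h
        exact h.le
      show ψ i p.2 ≤ cost2 p
      rw [hψ, hcost2]
      simp only
      refine pow_le_pow_left₀ (le_max_right _ _) ?_ 2
      refine max_le ?_ (norm_nonneg _)
      have htri : ‖(p.2 : EuclideanSpace ℝ (Fin d)) - c i‖ ≤
          ‖(p.2 : EuclideanSpace ℝ (Fin d)) - p.1‖ + ‖(p.1 : EuclideanSpace ℝ (Fin d)) - c i‖ := by
        calc ‖(p.2 : EuclideanSpace ℝ (Fin d)) - c i‖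
            = ‖((p.2 : EuclideanSpace ℝ (Fin d)) - p.1) + ((p.1 : EuclideanSpace ℝ (Fin d)) - c i)‖ := by
              rw [sub_add_sub_cancel]
          _ ≤ _ := norm_add_le _ _
      rw [norm_sub_rev (p.2 : EuclideanSpace ℝ (Fin d)) (p.1 : EuclideanSpace ℝ (Fin d))] at htri
      linarith
    linarith [s1, s2 ▸ s1, s3, s4, s5]
  -- summation
  have hμsum : ∑ i : Fin n, (μ (B i)).toReal = 1 := by
    have h0 : ∑ i : Fin n, μ (B i) = 1 := by
      have hc := congrArg (fun (κ : Measure Ω) => κ univ) hμdec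
      simp only [Measure.finset_sum_apply, Measure.restrict_apply MeasurableSet.univ,
        univ_inter, measure_univ] at hc
      exact hc.symm
    rw [← ENNReal.toReal_sum (fun i _ => measure_ne_top μ _), h0, ENNReal.toReal_one]
  have hcostsum : transportCost T' μ = ∑ i : Fin n, ∫ x, g x ∂(μ.restrict (B i)) := by
    show (∫ x, g x ∂μ) = _
    conv_lhs => rw [hμdec]
    exact integral_finset_sum_measure (fun i _ => hgint i)
  have hγsum : (∫ p, cost2 p ∂γ) = ∑ i : Fin n, ∫ p, cost2 p ∂(γ.restrict (C i)) := by
    conv_lhs => rw [hγdec]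
    exact integral_finset_sum_measure (fun i _ => hcost2int i)
  calc transportCost T' μ = ∑ i : Fin n, ∫ x, g x ∂(μ.restrict (B i)) := hcostsum
    _ ≤ ∑ i : Fin n, ((∫ p, cost2 p ∂(γ.restrict (C i))) + K * (μ (B i)).toReal) :=
        Finset.sum_le_sum (fun i _ => key i)
    _ = (∑ i : Fin n, ∫ p, cost2 p ∂(γ.restrict (C i))) + K * ∑ i : Fin n, (μ (B i)).toReal := by
        rw [Finset.sum_add_distrib, Finset.mul_sum]
    _ = (∫ p, cost2 p ∂γ) + K := by rw [← hγsum, hμsum, mul_one]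
    _ ≤ (∫ p, cost2 p ∂γ) + ε := by
        rw [hK]
        linarith [hgapε]


/-- Proposition 2 (second part): every minimizer of the regularized problem has a transport
component that is an optimal transport map from `μ` to its pushforward. -/
theorem stmt5 {d : ℕ} (hd : 1 ≤ d) (Ω : Set (EuclideanSpace ℝ (Fin d)))
    (hconv : Convex ℝ Ω) (hcomp : IsCompact Ω)
    (hfront : volume (frontier Ω) = 0)
    (𝓕 : Type*) [MetricSpace 𝓕] [CompactSpace 𝓕] [Nonempty 𝓕]
    (L : 𝓕 → Ω → ℝ) (hLcont : Continuous fun p : 𝓕 × Ω => L p.1 p.2)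
    (hLnonneg : ∀ F x, 0 ≤ L F x)
    (μ : Measure Ω) (hμ : IsProbabilityMeasure μ)
    (hac : μ.map (Subtype.val : Ω → EuclideanSpace ℝ (Fin d)) ≪ volume)
    (hμfront : μ.map (Subtype.val : Ω → EuclideanSpace ℝ (Fin d)) (frontier Ω) = 0)
    (τ : ℝ) (hτ : 0 < τ) :
    ∀ (T : Ω → Ω) (F : 𝓕), Measurable T →
      (∀ (T' : Ω → Ω), Measurable T' → ∀ F' : 𝓕,
        (∫ x, L F x ∂(μ.map T)) + (1 / (2 * τ)) * transportCost T μ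
          ≤ (∫ x, L F' x ∂(μ.map T')) + (1 / (2 * τ)) * transportCost T' μ) →
      transportCost T μ = W2sq μ (μ.map T) := by
  intro T F hT hmin
  haveI := hμ
  -- `μ` has no atoms
  haveI : Nonempty (Fin d) := ⟨⟨0, hd⟩⟩
  haveI hvol : NullSingletonClass (volume : Measure (EuclideanSpace ℝ (Fin d))) := inferInstance
  haveI hμatomless : NullSingletonClass μ := by
    refine ⟨fun x => ?_⟩
    have hpre : (Subtype.val : Ω → EuclideanSpace ℝ (Fin d)) ⁻¹' {(x : EuclideanSpace ℝ (Fin d))}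
        = {x} := by
      ext y
      simp only [mem_preimage, mem_singleton_iff]
      exact ⟨fun h => Subtype.ext h, fun h => by rw [h]⟩
    have h0 : μ.map (Subtype.val : Ω → EuclideanSpace ℝ (Fin d))
        {(x : EuclideanSpace ℝ (Fin d))} = 0 :=
      hac (measure_singleton _)
    rw [Measure.map_apply measurable_subtype_coe (measurableSet_singleton _), hpre] at h0
    exact h0
  -- membership of the graph coupling
  have hm : Measurable fun x : Ω => (x, T x) := measurable_id.prodMk hT
  have hmemb : transportCost T μ ∈ { c : ℝ | ∃ γ : Measure (Ω × Ω), IsProbabilityMeasure γ ∧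
      γ.map Prod.fst = μ ∧ γ.map Prod.snd = μ.map T ∧
      c = ∫ p, ‖(p.1 : EuclideanSpace ℝ (Fin d)) - (p.2 : EuclideanSpace ℝ (Fin d))‖ ^ 2 ∂γ } := by
    refine ⟨μ.map (fun x => (x, T x)), ?_, ?_, ?_, ?_⟩
    · exact Measure.isProbabilityMeasure_map hm.aemeasurable
    · rw [Measure.map_map measurable_fst hm]
      simp only [Function.comp_def]
      exact Measure.map_id
    · rw [Measure.map_map measurable_snd hm]
      rfl
    · rw [integral_map hm.aemeasurable]
      · have hTC : transportCost T μ = ∫ x,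
            ‖(T x : EuclideanSpace ℝ (Fin d)) - (x : EuclideanSpace ℝ (Fin d))‖ ^ 2 ∂μ := rfl
        rw [hTC]
        simp_rw [norm_sub_rev]
      · apply Continuous.aestronglyMeasurable
        exact ((continuous_subtype_val.comp continuous_fst).sub
          (continuous_subtype_val.comp continuous_snd)).norm.pow 2
  have hbdd : BddBelow { c : ℝ | ∃ γ : Measure (Ω × Ω), IsProbabilityMeasure γ ∧
      γ.map Prod.fst = μ ∧ γ.map Prod.snd = μ.map T ∧
      c = ∫ p, ‖(p.1 : EuclideanSpace ℝ (Fin d)) - (p.2 : EuclideanSpace ℝ (Fin d))‖ ^ 2 ∂γ } := by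
    refine ⟨0, ?_⟩
    rintro cc ⟨γ', -, -, -, rfl⟩
    exact integral_nonneg (fun p => by positivity)
  refine le_antisymm ?_ (csInf_le hbdd hmemb)
  refine le_csInf ⟨_, hmemb⟩ ?_
  rintro cc ⟨γ', hγ'prob, hγ'1, hγ'2, rfl⟩
  haveI := hγ'prob
  refine le_of_forall_pos_le_add (fun ε hε => ?_)
  obtain ⟨T'', hT''meas, hT''push, hT''cost⟩ :=
    exists_good_map hcomp μ γ' hγ'1 (μ.map T) hγ'2 hε
  have hmin' := hmin T'' hT''meas F
  rw [hT''push] at hmin'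
  have h2τ : 0 < 1 / (2 * τ) := by positivity
  have h4 : (1 / (2 * τ)) * transportCost T μ ≤ (1 / (2 * τ)) * transportCost T'' μ := by
    linarith
  have h5 : transportCost T μ ≤ transportCost T'' μ := (mul_le_mul_iff_right₀ h2τ).mp h4
  exact h5.trans hT''cost
end
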